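/- arXiv:1802.03683 — 5 statements merged into one kernel-verified Lean document; each statement's English description precedes it below -/
import Mathlib

section
/- Let C be an additive category and let U be the full subcategory of the morphism category Mor(C) consisting of objects of the form (X --1--> X) ⊕ (Y --> 0). Then the quotient category Mor(C)/[U] is equivalent to mod-C, via sending an object f : X --> Y of Mor(C) to the cokernel of C(-,f) : C(-,X) --> C(-,Y). -/
open CategoryTheory CategoryTheory.Limits Opposite ZeroObject CategoryTheory.Pretriangulated

universe w v u

namespace Paper

section IdealQuotient

variable (C : Type u) [Category.{v} C] [Preadditive C]

/-- The additive subgroup of morphisms `X ⟶ Y` generated by the morphisms factoring through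
an object satisfying `P`; this is the ideal `[D]` associated to the full subcategory `D`
of objects satisfying `P`. -/
def idealOf (P : C → Prop) (X Y : C) : AddSubgroup (X ⟶ Y) :=
  AddSubgroup.closure
    {f : X ⟶ Y | ∃ (Z : C), P Z ∧ ∃ (u : X ⟶ Z) (v : Z ⟶ Y), f = u ≫ v}

variable {C}

lemma idealOf_comp_left (P : C → Prop) {X Y Z : C} (h : X ⟶ Y) {x : Y ⟶ Z}
    (hx : x ∈ idealOf C P Y Z) : h ≫ x ∈ idealOf C P X Z := by
  have hle : idealOf C P Y Z ≤
      AddSubgroup.comap (Preadditive.leftComp Z h) (idealOf C P X Z) := by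
    rw [idealOf, AddSubgroup.closure_le]
    rintro g ⟨W, hW, u, v, rfl⟩
    exact AddSubgroup.subset_closure ⟨W, hW, h ≫ u, v, by simp [Preadditive.leftComp]⟩
  exact hle hx

lemma idealOf_comp_right (P : C → Prop) {X Y Z : C} {x : X ⟶ Y} (h : Y ⟶ Z)
    (hx : x ∈ idealOf C P X Y) : x ≫ h ∈ idealOf C P X Z := by
  have hle : idealOf C P X Y ≤
      AddSubgroup.comap (Preadditive.rightComp X h) (idealOf C P X Z) := by
    rw [idealOf, AddSubgroup.closure_le]
    rintro g ⟨W, hW, u, v, rfl⟩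
    exact AddSubgroup.subset_closure ⟨W, hW, u, v ≫ h, by simp [Preadditive.rightComp]⟩
  exact hle hx

variable (C)

/-- The hom relation on `C` identifying two morphisms whose difference lies in the
ideal of morphisms factoring through an object satisfying `P`. -/
def idealRel (P : C → Prop) : HomRel C := fun {X Y} f g => f - g ∈ idealOf C P X Y

instance idealRel_congruence (P : C → Prop) : Congruence (idealRel C P) where
  equivalence :=
    { refl := fun f => by simpa [idealRel] using (idealOf C P _ _).zero_mem
      symm := fun {f g} h => by
        simpa [idealRel, neg_sub] using (idealOf C P _ _).neg_mem h
      trans := fun {f g h} h₁ h₂ => by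
        simpa [idealRel, sub_add_sub_cancel] using (idealOf C P _ _).add_mem h₁ h₂ }
  comp_left := by
    intro X Y Z f g g' h
    simpa [idealRel, Preadditive.comp_sub] using idealOf_comp_left P f h
  comp_right := by
    intro X Y Z f f' g h
    simpa [idealRel, Preadditive.sub_comp] using idealOf_comp_right P g h

lemma idealRel_add (P : C → Prop) ⦃X Y : C⦄ (f₁ f₂ g₁ g₂ : X ⟶ Y)
    (h₁ : idealRel C P f₁ f₂) (h₂ : idealRel C P g₁ g₂) :
    idealRel C P (f₁ + g₁) (f₂ + g₂) := by
  simpa [idealRel, add_sub_add_comm] using (idealOf C P X Y).add_mem h₁ h₂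

/-- The quotient of `C` by the ideal of morphisms factoring through an object
satisfying `P`; e.g. the stable category `C/[𝒫]`. -/
abbrev IdealQuot (P : C → Prop) := CategoryTheory.Quotient (idealRel C P)

instance (P : C → Prop) : Preadditive (IdealQuot C P) :=
  Quotient.preadditive _ (idealRel_add C P)

instance (P : C → Prop) : (Quotient.functor (idealRel C P)).Additive :=
  Quotient.functor_additive _ (idealRel_add C P)

end IdealQuotient

section FP

variable (C : Type u) [Category.{v} C] [Preadditive C]

/-- A contravariant additive-group-valued functor is finitely presented if it is a cokernel
of a morphism between representable functors. -/
def IsFP (F : Cᵒᵖ ⥤ AddCommGrpCat.{v}) : Prop :=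
  ∃ (X Y : C) (f : X ⟶ Y), Nonempty (F ≅ cokernel (preadditiveYoneda.map f))

/-- The category `mod-C` of finitely presented contravariant functors. -/
abbrev ModCat := ObjectProperty.FullSubcategory (IsFP C)

/-- A covariant functor is finitely presented if it is a cokernel of a morphism
between corepresentable functors. -/
def IsFPCo (F : C ⥤ AddCommGrpCat.{v}) : Prop :=
  ∃ (X Y : C) (f : X ⟶ Y), Nonempty (F ≅ cokernel (preadditiveCoyoneda.map f.op))

/-- The category `mod-Cᵒᵖ` of finitely presented covariant functors. -/
abbrev CoModCat := ObjectProperty.FullSubcategory (IsFPCo C)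

end FP

section ArrowPreadditive

variable {C : Type u} [Category.{v} C] [Preadditive C]

namespace ArrowHom

variable {A B : Arrow C}

instance : Zero (A ⟶ B) := ⟨{ left := 0, right := 0, w := by simp }⟩
instance : Add (A ⟶ B) :=
  ⟨fun f g => { left := f.left + g.left, right := f.right + g.right,
                w := by simp [Preadditive.add_comp, Preadditive.comp_add] }⟩
instance : Neg (A ⟶ B) :=
  ⟨fun f => { left := -f.left, right := -f.right, w := by simp }⟩
instance : Sub (A ⟶ B) :=
  ⟨fun f g => { left := f.left - g.left, right := f.right - g.right,
                w := by simp [Preadditive.sub_comp, Preadditive.comp_sub] }⟩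
instance : SMul ℕ (A ⟶ B) :=
  ⟨fun n f => { left := n • f.left, right := n • f.right, w := by simp }⟩
instance : SMul ℤ (A ⟶ B) :=
  ⟨fun n f => { left := n • f.left, right := n • f.right, w := by simp }⟩

@[simp] lemma zero_left : (0 : A ⟶ B).left = 0 := rfl
@[simp] lemma zero_right : (0 : A ⟶ B).right = 0 := rfl
@[simp] lemma add_left (f g : A ⟶ B) : (f + g).left = f.left + g.left := rfl
@[simp] lemma add_right (f g : A ⟶ B) : (f + g).right = f.right + g.right := rfl
@[simp] lemma neg_left (f : A ⟶ B) : (-f).left = -f.left := rfl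
@[simp] lemma neg_right (f : A ⟶ B) : (-f).right = -f.right := rfl

def toPair (f : A ⟶ B) : (A.left ⟶ B.left) × (A.right ⟶ B.right) := (f.left, f.right)

lemma toPair_injective : Function.Injective (toPair (A := A) (B := B)) := by
  rintro ⟨⟩ ⟨⟩ h
  injection h with h₁ h₂
  exact CommaMorphism.ext h₁ h₂

instance : AddCommGroup (A ⟶ B) :=
  toPair_injective.addCommGroup toPair rfl (fun _ _ => rfl) (fun _ => rfl) (fun _ _ => rfl)
    (fun _ _ => rfl) (fun _ _ => rfl)

end ArrowHom

instance : Preadditive (Arrow C) where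
  homGroup A B := inferInstance
  add_comp := by
    intros; apply CommaMorphism.ext <;> simp [Preadditive.add_comp]
  comp_add := by
    intros; apply CommaMorphism.ext <;> simp [Preadditive.comp_add]

end ArrowPreadditive


/-- objects of `Mor(C)` of the form `(X —1→ X) ⊕ (Y → 0)` -/
def IsUObj (C : Type u) [Category.{v} C] [Preadditive C] [HasZeroObject C]
    [HasBinaryBiproducts C] (a : Arrow C) : Prop :=
  ∃ (X Y : C), Nonempty (a ≅ Arrow.mk (biprod.map (𝟙 X) (0 : Y ⟶ (0 : C))))

noncomputable section Statement0Construction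

lemma exists_of_cokernelπ_eq_zero {G H : AddCommGrpCat.{w}} (f : G ⟶ H) (x : H)
    (hx : cokernel.π f x = 0) : ∃ g : G, f g = x := by
  have hcond : f ≫ AddCommGrpCat.ofHom (QuotientAddGroup.mk' (AddMonoidHom.range f.hom)) = 0 := by
    ext g
    simpa using (QuotientAddGroup.eq_zero_iff _).2 (AddMonoidHom.mem_range.2 ⟨g, rfl⟩)
  have h1 : cokernel.π f ≫ cokernel.desc f _ hcond
      = AddCommGrpCat.ofHom (QuotientAddGroup.mk' (AddMonoidHom.range f.hom)) :=
    cokernel.π_desc _ _ _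
  have h3 : (cokernel.desc f _ hcond) (cokernel.π f x)
      = QuotientAddGroup.mk' (AddMonoidHom.range f.hom) x :=
    congrArg (fun (t : H ⟶ AddCommGrpCat.of (H ⧸ AddMonoidHom.range f.hom)) => t x) h1
  have h2 : QuotientAddGroup.mk' (AddMonoidHom.range f.hom) x = 0 := by
    rw [← h3, hx, map_zero]
  exact (QuotientAddGroup.eq_zero_iff x).1 h2

variable {C : Type u} [Category.{v} C] [Preadditive C]

lemma yoneda_ext {W : C} {F : Cᵒᵖ ⥤ AddCommGrpCat.{v}} (α β : preadditiveYoneda.obj W ⟶ F)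
    (h : α.app (op W) (𝟙 W) = β.app (op W) (𝟙 W)) : α = β := by
  ext V g
  have key : ∀ (γ : preadditiveYoneda.obj W ⟶ F),
      γ.app V g = F.map (Quiver.Hom.op (g : V.unop ⟶ W)) (γ.app (op W) (𝟙 W)) := by
    intro γ
    have hnat := γ.naturality (Quiver.Hom.op (g : V.unop ⟶ W))
    have h1 : γ.app V (((preadditiveYoneda.obj W).map (Quiver.Hom.op (g : V.unop ⟶ W))) (𝟙 W))
        = F.map (Quiver.Hom.op (g : V.unop ⟶ W)) (γ.app (op W) (𝟙 W)) :=
      congrArg (fun (t : (preadditiveYoneda.obj W).obj (op W) ⟶ F.obj V) => t (𝟙 W)) hnat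
    have hg : ((preadditiveYoneda.obj W).map (Quiver.Hom.op (g : V.unop ⟶ W))) (𝟙 W) = g :=
      Category.comp_id g
    rw [hg] at h1
    exact h1
  rw [key α, key β, h]

lemma exists_fac_of_comp_π_eq_zero {X' Y' W : C} (f : X' ⟶ Y') (h : W ⟶ Y')
    (H : preadditiveYoneda.map h ≫ cokernel.π (preadditiveYoneda.map f) = 0) :
    ∃ w : W ⟶ X', w ≫ f = h := by
  set E := (evaluation Cᵒᵖ AddCommGrpCat.{v}).obj (op W) with hE
  have happ : (cokernel.π (preadditiveYoneda.map f)).app (op W) h = 0 := by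
    have h1 : (cokernel.π (preadditiveYoneda.map f)).app (op W)
        ((preadditiveYoneda.map h).app (op W) (𝟙 W)) = 0 :=
      congrArg (fun (t : (preadditiveYoneda.obj W).obj (op W) ⟶ _) => t (𝟙 W))
        (congrArg (fun (t : preadditiveYoneda.obj W ⟶ _) => t.app (op W)) H)
    have h2 : ((preadditiveYoneda.map h).app (op W)) (𝟙 W) = h := Category.id_comp h
    rw [h2] at h1
    exact h1
  have hIso : IsIso (cokernelComparison (preadditiveYoneda.map f) E) := by
    rw [← PreservesCokernel.iso_inv]
    infer_instance
  have h4 : (cokernelComparison (preadditiveYoneda.map f) E)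
      ((cokernel.π (E.map (preadditiveYoneda.map f))) h)
      = (E.map (cokernel.π (preadditiveYoneda.map f))) h :=
    congrArg
      (fun (t : E.obj (preadditiveYoneda.obj Y') ⟶ E.obj (cokernel (preadditiveYoneda.map f)))
        => t h)
      (π_comp_cokernelComparison (preadditiveYoneda.map f) E)
  have h5 : (cokernel.π (E.map (preadditiveYoneda.map f))) h = 0 := by
    apply (AddCommGrpCat.mono_iff_injective (cokernelComparison (preadditiveYoneda.map f) E)).1
      inferInstance
    rw [h4, map_zero]
    exact happ
  obtain ⟨g, hg⟩ := exists_of_cokernelπ_eq_zero (E.map (preadditiveYoneda.map f)) h h5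
  exact ⟨g, hg⟩

lemma pY_map_add {X Y : C} (u v : X ⟶ Y) :
    preadditiveYoneda.map (u + v) = preadditiveYoneda.map u + preadditiveYoneda.map v := by
  ext V g
  exact Preadditive.comp_add _ _ _ _ _ _

variable (C)

/-- The functor `Arrow C ⥤ (Cᵒᵖ ⥤ AddCommGrpCat)` sending `f` to `Coker C(-,f)`. -/
def Gamb : Arrow C ⥤ (Cᵒᵖ ⥤ AddCommGrpCat.{v}) where
  obj a := cokernel (preadditiveYoneda.map a.hom)
  map {a b} φ := cokernel.map _ _ (preadditiveYoneda.map φ.left) (preadditiveYoneda.map φ.right)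
    (by rw [← Functor.map_comp, ← Functor.map_comp, Arrow.w])
  map_id a := by
    apply coequalizer.hom_ext
    simp [cokernel.map]
  map_comp f g := by
    apply coequalizer.hom_ext
    simp [cokernel.map]

lemma Gamb_π_map {a b : Arrow C} (φ : a ⟶ b) :
    cokernel.π (preadditiveYoneda.map a.hom) ≫ (Gamb C).map φ
      = preadditiveYoneda.map φ.right ≫ cokernel.π (preadditiveYoneda.map b.hom) := by
  simp [Gamb, cokernel.map]

lemma Gamb_map_add {a b : Arrow C} (f g : a ⟶ b) :
    (Gamb C).map (f + g) = (Gamb C).map f + (Gamb C).map g := by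
  apply coequalizer.hom_ext
  simp [Gamb, cokernel.map, ArrowHom.add_left, ArrowHom.add_right, pY_map_add,
    Preadditive.add_comp, Preadditive.comp_add]
  exact ((Preadditive.comp_add _ _ _ _ _ _).trans
    (congrArg₂ (· + ·) (cokernel.π_desc _ _ _) (cokernel.π_desc _ _ _))).symm

/-- `Gamb` as an additive map on hom groups. -/
def GambAddHom (a b : Arrow C) : (a ⟶ b) →+ ((Gamb C).obj a ⟶ (Gamb C).obj b) :=
  AddMonoidHom.mk' (fun f => (Gamb C).map f) (Gamb_map_add C)

variable [HasZeroObject C] [HasBinaryBiproducts C]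

lemma isZero_Gamb_of_isUObj (a : Arrow C) (ha : IsUObj C a) : IsZero ((Gamb C).obj a) := by
  obtain ⟨X, Y, ⟨i⟩⟩ := ha
  have hsec : (biprod.fst ≫ biprod.inl : X ⊞ (0 : C) ⟶ X ⊞ Y)
      ≫ biprod.map (𝟙 X) (0 : Y ⟶ (0 : C)) = 𝟙 _ := by
    apply biprod.hom_ext'
    · simp
    · apply (isZero_zero C).eq_of_src
  have hsplit : IsSplitEpi (preadditiveYoneda.map (biprod.map (𝟙 X) (0 : Y ⟶ (0 : C)))) :=
    IsSplitEpi.mk' ⟨preadditiveYoneda.map (biprod.fst ≫ biprod.inl), by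
      rw [← Functor.map_comp, hsec, CategoryTheory.Functor.map_id]⟩
  have h0 : IsZero ((Gamb C).obj (Arrow.mk (biprod.map (𝟙 X) (0 : Y ⟶ (0 : C))))) :=
    (isZero_zero _).of_iso (cokernel.ofEpi (preadditiveYoneda.map (biprod.map (𝟙 X) (0 : Y ⟶ (0 : C)))))
  exact h0.of_iso ((Gamb C).mapIso i)

lemma Gamb_map_eq_zero_of_mem {a b : Arrow C} {x : a ⟶ b}
    (hx : x ∈ idealOf (Arrow C) (IsUObj C) a b) : (Gamb C).map x = 0 := by
  have hle : idealOf (Arrow C) (IsUObj C) a b ≤ (GambAddHom C a b).ker := by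
    rw [idealOf, AddSubgroup.closure_le]
    rintro x ⟨Z, hZ, u, v, rfl⟩
    have hz : (Gamb C).map v = 0 := (isZero_Gamb_of_isUObj C Z hZ).eq_of_src _ _
    have hmem : (GambAddHom C a b) (u ≫ v) = 0 := by
      show (Gamb C).map (u ≫ v) = 0
      rw [Functor.map_comp, hz, Limits.comp_zero]
    exact hmem
  exact hle hx

lemma isUObj_id (W : C) : IsUObj C (Arrow.mk (𝟙 W)) := by
  refine ⟨W, 0, ⟨Arrow.isoMk
    ⟨biprod.inl, biprod.fst, by simp, ?_⟩ ⟨biprod.inl, biprod.fst, by simp, ?_⟩ (by simp)⟩⟩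
  all_goals
    apply biprod.hom_ext
    · simp
    · apply (isZero_zero C).eq_of_tgt

lemma isUObj_toZero (V : C) : IsUObj C (Arrow.mk (0 : V ⟶ (0 : C))) := by
  have hz : IsZero ((0 : C) ⊞ (0 : C)) := by
    rw [IsZero.iff_id_eq_zero]
    apply biprod.hom_ext
    · apply (isZero_zero C).eq_of_tgt
    · apply (isZero_zero C).eq_of_tgt
  refine ⟨0, V, ⟨Arrow.isoMk ⟨biprod.inr, biprod.snd, by simp, ?_⟩ ((isZero_zero C).iso hz)
    (hz.eq_of_tgt _ _)⟩⟩
  apply biprod.hom_ext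
  · apply (isZero_zero C).eq_of_tgt
  · simp

lemma mem_ideal_of_Gamb_map_eq_zero {a b : Arrow C} (η : a ⟶ b)
    (h : (Gamb C).map η = 0) : η ∈ idealOf (Arrow C) (IsUObj C) a b := by
  have h1 : preadditiveYoneda.map η.right ≫ cokernel.π (preadditiveYoneda.map b.hom) = 0 := by
    rw [← Gamb_π_map, h]; exact Limits.comp_zero
  obtain ⟨w, hw⟩ := exists_fac_of_comp_π_eq_zero (X' := b.left) (Y' := b.right) (W := a.right) b.hom η.right h1
  have pfq : (η.left - (a.hom ≫ w : a.left ⟶ b.left)) ≫ b.hom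
      = (Arrow.mk (0 : a.left ⟶ (0 : C))).hom ≫ (0 : (0 : C) ⟶ b.right) := by
    have hwb : (a.hom ≫ w : a.left ⟶ b.left) ≫ b.hom = a.hom ≫ η.right := by
      rw [Category.assoc]
      rw [hw]
    rw [Preadditive.sub_comp, hwb, Arrow.w η]
    simp
  have hsum : η =
      ((Arrow.homMk (u := (a.hom ≫ w : a.left ⟶ b.left)) (v := w) (by simp) :
          a ⟶ Arrow.mk (𝟙 b.left))
        ≫ (Arrow.homMk (u := 𝟙 b.left) (v := b.hom) (by simp) : Arrow.mk (𝟙 b.left) ⟶ b))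
      + ((Arrow.homMk (u := 𝟙 a.left) (v := 0) (by simp) : a ⟶ Arrow.mk (0 : a.left ⟶ (0 : C)))
        ≫ (Arrow.homMk (u := (η.left - (a.hom ≫ w : a.left ⟶ b.left) : a.left ⟶ b.left))
            (v := 0) pfq :
            Arrow.mk (0 : a.left ⟶ (0 : C)) ⟶ b)) := by
    apply CommaMorphism.ext
    · show η.left = (a.hom ≫ w : a.left ⟶ b.left) ≫ 𝟙 b.left
          + 𝟙 a.left ≫ (η.left - (a.hom ≫ w : a.left ⟶ b.left))
      simp
    · show η.right = (w ≫ b.hom : a.right ⟶ b.right) + (0 : a.right ⟶ (0 : C)) ≫ (0 : (0 : C) ⟶ b.right)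
      simp only [Limits.zero_comp, Limits.comp_zero, add_zero]
      exact hw.symm
  rw [hsum]
  refine AddSubgroup.add_mem _ ?_ ?_
  · exact AddSubgroup.subset_closure ⟨Arrow.mk (𝟙 b.left), isUObj_id C b.left, _, _, rfl⟩
  · exact AddSubgroup.subset_closure ⟨Arrow.mk (0 : a.left ⟶ (0 : C)), isUObj_toZero C a.left,
      _, _, rfl⟩

lemma Gamb_map_surjective (a b : Arrow C)
    (φ : (Gamb C).obj a ⟶ (Gamb C).obj b) : ∃ η : a ⟶ b, (Gamb C).map η = φ := by
  set t : preadditiveYoneda.obj a.right ⟶ (Gamb C).obj b :=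
    cokernel.π (preadditiveYoneda.map a.hom) ≫ φ with ht
  have hepi : Epi ((cokernel.π (preadditiveYoneda.map b.hom)).app (op a.right)) :=
    (NatTrans.epi_iff_epi_app (cokernel.π (preadditiveYoneda.map b.hom))).1 inferInstance _
  obtain ⟨(v : a.right ⟶ b.right), hv⟩ := (AddCommGrpCat.epi_iff_surjective _).1 hepi (t.app (op a.right) (𝟙 a.right))
  have hs : preadditiveYoneda.map (v : a.right ⟶ b.right)
      ≫ cokernel.π (preadditiveYoneda.map b.hom) = t := by
    apply yoneda_ext
    show (cokernel.π (preadditiveYoneda.map b.hom)).app (op a.right)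
        (((preadditiveYoneda.map (v : a.right ⟶ b.right)).app (op a.right)) (𝟙 a.right))
      = t.app (op a.right) (𝟙 a.right)
    have hid : ((preadditiveYoneda.map (v : a.right ⟶ b.right)).app (op a.right)) (𝟙 a.right)
        = v := Category.id_comp _
    rw [hid]
    exact hv
  have hzero : preadditiveYoneda.map (a.hom ≫ (v : a.right ⟶ b.right))
      ≫ cokernel.π (preadditiveYoneda.map b.hom) = 0 := by
    rw [Functor.map_comp, Category.assoc, hs, ht]
    exact (cokernel.condition_assoc _ φ).trans Limits.zero_comp
  obtain ⟨u, hu⟩ := exists_fac_of_comp_π_eq_zero (X' := b.left) (Y' := b.right) (W := a.left) b.hom (a.hom ≫ (v : a.right ⟶ b.right)) hzero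
  refine ⟨(Arrow.homMk (u := u) (v := (v : a.right ⟶ b.right)) hu : a ⟶ b), ?_⟩
  apply coequalizer.hom_ext
  show cokernel.π (preadditiveYoneda.map a.hom) ≫ (Gamb C).map _
      = cokernel.π (preadditiveYoneda.map a.hom) ≫ φ
  rw [Gamb_π_map]
  exact hs

/-- `Gamb` corestricted to `mod-C`. -/
def Gmod : Arrow C ⥤ ModCat C :=
  ObjectProperty.lift (IsFP C) (Gamb C) (fun a => ⟨a.left, a.right, a.hom, ⟨Iso.refl _⟩⟩)

/-- The induced functor on the quotient category. -/
def GQ : IdealQuot (Arrow C) (IsUObj C) ⥤ ModCat C :=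
  CategoryTheory.Quotient.lift _ (Gmod C) (fun a b f g hfg => by
    have h0 : (Gamb C).map (f - g) = 0 := Gamb_map_eq_zero_of_mem C hfg
    have hsub : (GambAddHom C a b) (f - g) = (GambAddHom C a b) f - (GambAddHom C a b) g :=
      map_sub _ f g
    have hfg' : (Gamb C).map f = (Gamb C).map g := by
      have h0' : (GambAddHom C a b) (f - g) = 0 := h0
      rw [hsub] at h0'
      exact sub_eq_zero.1 h0'
    exact InducedCategory.hom_ext hfg')

lemma GQ_map {a b : Arrow C} (f : a ⟶ b) :
    (GQ C).map ((Quotient.functor (idealRel (Arrow C) (IsUObj C))).map f) = (Gmod C).map f :=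
  Quotient.lift_map_functor_map _ (Gmod C) _ f

instance GQ_full : (GQ C).Full where
  map_surjective {X Y} φ := by
    obtain ⟨η, hη⟩ := Gamb_map_surjective C X.as Y.as φ.hom
    refine ⟨(Quotient.functor (idealRel (Arrow C) (IsUObj C))).map η, ?_⟩
    rw [GQ_map]
    exact InducedCategory.hom_ext hη

instance GQ_faithful : (GQ C).Faithful where
  map_injective {X Y} f g hfg := by
    obtain ⟨f', rfl⟩ := (Quotient.functor (idealRel (Arrow C) (IsUObj C))).map_surjective
      (X := X.as) (Y := Y.as) f
    obtain ⟨g', rfl⟩ := (Quotient.functor (idealRel (Arrow C) (IsUObj C))).map_surjective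
      (X := X.as) (Y := Y.as) g
    rw [GQ_map, GQ_map] at hfg
    have hfg' : (Gamb C).map f' = (Gamb C).map g' := congrArg (fun t => t.hom) hfg
    have h0 : (Gamb C).map (f' - g') = 0 := by
      have hsub : (GambAddHom C X.as Y.as) (f' - g')
          = (GambAddHom C X.as Y.as) f' - (GambAddHom C X.as Y.as) g' := map_sub _ f' g'
      show (GambAddHom C X.as Y.as) (f' - g') = 0
      rw [hsub]
      show (Gamb C).map f' - (Gamb C).map g' = 0
      rw [hfg', sub_self]
    exact CategoryTheory.Quotient.sound _ (mem_ideal_of_Gamb_map_eq_zero C (f' - g') h0)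

instance GQ_essSurj : (GQ C).EssSurj where
  mem_essImage F := by
    obtain ⟨X, Y, f, ⟨i⟩⟩ := F.property
    exact ⟨(Quotient.functor (idealRel (Arrow C) (IsUObj C))).obj (Arrow.mk f),
      ⟨ObjectProperty.isoMk _ i.symm⟩⟩

instance GQ_isEquivalence : (GQ C).IsEquivalence where

end Statement0Construction

/-- Let `C` be an additive category and `U` the full subcategory of `Mor(C)`
consisting of objects `(X —1→ X) ⊕ (Y → 0)`. Then `Mor(C)/[U]` is equivalent to `mod-C`,
via `f ↦ Coker C(-, f)`. -/
theorem statement0 (C : Type u) [Category.{v} C] [Preadditive C] [HasZeroObject C]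
    [HasBinaryBiproducts C] :
    ∃ e : IdealQuot (Arrow C) (IsUObj C) ≌ ModCat C,
      ∀ a : Arrow C,
        Nonempty
          ((e.functor.obj ((Quotient.functor (idealRel (Arrow C) (IsUObj C))).obj a)).obj ≅
            cokernel (preadditiveYoneda.map a.hom)) :=
  ⟨(GQ C).asEquivalence, fun _ => ⟨Iso.refl _⟩⟩

end Paper
end

section
/- Let C be an additive category. Let R be the ideal of Mor(C) where R(f,f') consists of those morphisms (a,b) from f : X --> Y to f' : X' --> Y' for which there exists p : Y --> X' with f'p = b, and let R' be the ideal where R'(f,f') consists of those (a,b) for which there exists p : Y --> X' with pf = a. Then Mor(C)/R is equivalent to mod-C (via f ↦ Coker C(-,f)), and Mor(C)/R' is equivalent to (mod-C^op)^op (via f ↦ Coker C(f,-)). -/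
open CategoryTheory CategoryTheory.Limits Opposite ZeroObject CategoryTheory.Pretriangulated

universe w v u

namespace Paper

/-- the ideal `R` of `Mor(C)`: a morphism `(a, b) : f ⟶ f'` lies in `R` iff there is
`p : Y ⟶ X'` with `f' ∘ p = b`. As a hom relation: `φ ∼ ψ` iff `φ - ψ ∈ R`. -/
def RRel (C : Type u) [Category.{v} C] [Preadditive C] : HomRel (Arrow C) :=
  fun {A B} φ ψ => ∃ p : A.right ⟶ B.left, p ≫ B.hom = φ.right - ψ.right

/-- the ideal `R'` of `Mor(C)`: a morphism `(a, b) : f ⟶ f'` lies in `R'` iff there is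
`p : Y ⟶ X'` with `p ∘ f = a`. -/
def R'Rel (C : Type u) [Category.{v} C] [Preadditive C] : HomRel (Arrow C) :=
  fun {A B} φ ψ => ∃ p : A.right ⟶ B.left, A.hom ≫ p = φ.left - ψ.left


noncomputable section
variable {C : Type u} [Category.{v} C] [Preadditive C]

lemma coker_surj {X Y : C} (f : X ⟶ Y) (Z : C)
    (x : (cokernel (preadditiveYoneda.map f)).obj (op Z)) :
    ∃ g : Z ⟶ Y, (cokernel.π (preadditiveYoneda.map f)).app (op Z) g = x := by
  have : Epi ((cokernel.π (preadditiveYoneda.map f)).app (op Z)) := inferInstance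
  exact (AddCommGrpCat.epi_iff_surjective _).mp this x

lemma coker_exact {X Y : C} (f : X ⟶ Y) (Z : C) (g : Z ⟶ Y)
    (hg : (cokernel.π (preadditiveYoneda.map f)).app (op Z) g = 0) :
    ∃ p : Z ⟶ X, p ≫ f = g := by
  let S : ShortComplex (Cᵒᵖ ⥤ AddCommGrpCat.{v}) :=
    ShortComplex.mk (preadditiveYoneda.map f) (cokernel.π _) (cokernel.condition _)
  have hS : S.Exact := S.exact_of_g_is_cokernel (cokernelIsCokernel _)
  have hS2 := hS.map ((evaluation Cᵒᵖ AddCommGrpCat.{v}).obj (op Z))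
  rw [ShortComplex.ab_exact_iff] at hS2
  obtain ⟨p, hp⟩ := hS2 g hg
  exact ⟨p, hp⟩

lemma yoneda_hom_ext {Y : C} {G : Cᵒᵖ ⥤ AddCommGrpCat.{v}} (s t : preadditiveYoneda.obj Y ⟶ G)
    (h : s.app (op Y) (𝟙 Y) = t.app (op Y) (𝟙 Y)) : s = t := by
  ext Z g
  change s.app Z g = t.app Z g
  have hs := ConcreteCategory.congr_hom (s.naturality (g : (unop Z) ⟶ Y).op) (𝟙 Y)
  have ht := ConcreteCategory.congr_hom (t.naturality (g : (unop Z) ⟶ Y).op) (𝟙 Y)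
  have e : (g : (unop Z) ⟶ Y) ≫ 𝟙 Y = g := Category.comp_id _
  change s.app Z ((g : (unop Z) ⟶ Y) ≫ 𝟙 Y) = _ at hs
  change t.app Z ((g : (unop Z) ⟶ Y) ≫ 𝟙 Y) = _ at ht
  rw [e] at hs ht
  exact hs.trans (Eq.trans (congrArg (fun x => G.map (g : (unop Z) ⟶ Y).op x) h) ht.symm)

lemma pY_map_sub {X Y : C} (f g : X ⟶ Y) :
    preadditiveYoneda.map (f - g) = preadditiveYoneda.map f - preadditiveYoneda.map g := by
  ext Z h
  show (h : unop Z ⟶ X) ≫ (f - g) = _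
  simp [Preadditive.comp_sub]
  exact Preadditive.comp_sub _ _ _

omit [Preadditive C] in
lemma natApp {F G : Cᵒᵖ ⥤ AddCommGrpCat.{v}} (s : F ⟶ G) {Z W : Cᵒᵖ} (f : Z ⟶ W) (x : F.obj Z) :
    s.app W (F.map f x) = G.map f (s.app Z x) := by
  have h := ConcreteCategory.congr_hom (s.naturality f) x
  exact h

lemma coker_surj' {X Y : C} (f : X ⟶ Y) (Z : C)
    (x : (cokernel (preadditiveCoyoneda.map f.op)).obj Z) :
    ∃ g : X ⟶ Z, (cokernel.π (preadditiveCoyoneda.map f.op)).app Z g = x := by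
  have : Epi ((cokernel.π (preadditiveCoyoneda.map f.op)).app Z) := inferInstance
  exact (AddCommGrpCat.epi_iff_surjective _).mp this x

lemma coker_exact' {X Y : C} (f : X ⟶ Y) (Z : C) (g : X ⟶ Z)
    (hg : (cokernel.π (preadditiveCoyoneda.map f.op)).app Z g = 0) :
    ∃ p : Y ⟶ Z, f ≫ p = g := by
  let S : ShortComplex (C ⥤ AddCommGrpCat.{v}) :=
    ShortComplex.mk (preadditiveCoyoneda.map f.op) (cokernel.π _) (cokernel.condition _)
  have hS : S.Exact := S.exact_of_g_is_cokernel (cokernelIsCokernel _)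
  have hS2 := hS.map ((evaluation C AddCommGrpCat.{v}).obj Z)
  rw [ShortComplex.ab_exact_iff] at hS2
  obtain ⟨p, hp⟩ := hS2 g hg
  exact ⟨p, hp⟩

lemma coyoneda_hom_ext {X : C} {G : C ⥤ AddCommGrpCat.{v}}
    (s t : preadditiveCoyoneda.obj (op X) ⟶ G)
    (h : s.app X (𝟙 X) = t.app X (𝟙 X)) : s = t := by
  ext Z g
  change s.app Z g = t.app Z g
  have hs := ConcreteCategory.congr_hom (s.naturality (g : X ⟶ Z)) (𝟙 X)
  have ht := ConcreteCategory.congr_hom (t.naturality (g : X ⟶ Z)) (𝟙 X)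
  simp only [comp_apply] at hs ht
  have e : (𝟙 X) ≫ (g : X ⟶ Z) = g := Category.id_comp _
  change s.app Z ((𝟙 X) ≫ (g : X ⟶ Z)) = _ at hs
  change t.app Z ((𝟙 X) ≫ (g : X ⟶ Z)) = _ at ht
  rw [e] at hs ht
  exact hs.trans (Eq.trans (congrArg (fun x => G.map (g : X ⟶ Z) x) h) ht.symm)

lemma pCoy_map_sub {X Y : C} (f g : X ⟶ Y) :
    preadditiveCoyoneda.map (f - g).op
      = preadditiveCoyoneda.map f.op - preadditiveCoyoneda.map g.op := by
  ext Z h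
  show (f - g) ≫ (h : Y ⟶ Z) = _
  simp [Preadditive.sub_comp]
  exact Preadditive.sub_comp _ _ _

omit [Preadditive C] in
lemma natApp' {F G : C ⥤ AddCommGrpCat.{v}} (s : F ⟶ G) {Z W : C} (f : Z ⟶ W) (x : F.obj Z) :
    s.app W (F.map f x) = G.map f (s.app Z x) := by
  have h := ConcreteCategory.congr_hom (s.naturality f) x
  exact h


variable (C)

def F0' : Arrow C ⥤ (Cᵒᵖ ⥤ AddCommGrpCat.{v}) where
  obj a := cokernel (preadditiveYoneda.map a.hom)
  map {a b} φ := cokernel.map _ _ (preadditiveYoneda.map φ.left) (preadditiveYoneda.map φ.right)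
    (by rw [← preadditiveYoneda.map_comp, ← preadditiveYoneda.map_comp, Arrow.w])
  map_id a := by
    apply coequalizer.hom_ext
    simp
  map_comp φ ψ := by
    apply coequalizer.hom_ext
    simp

def F0 : Arrow C ⥤ ModCat C :=
  ObjectProperty.lift _ (F0' C) (fun a => ⟨a.left, a.right, a.hom, ⟨Iso.refl _⟩⟩)

lemma F0_rel {a b : Arrow C} (φ ψ : a ⟶ b) (h : RRel C φ ψ) : (F0 C).map φ = (F0 C).map ψ := by
  obtain ⟨p, hp⟩ := h
  apply InducedCategory.hom_ext
  show (F0' C).map φ = (F0' C).map ψ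
  refine (cancel_epi (cokernel.π (preadditiveYoneda.map a.hom))).1 ?_
  dsimp only [F0']
  rw [cokernel.π_desc, cokernel.π_desc]
  rw [← sub_eq_zero, ← Preadditive.sub_comp, ← pY_map_sub, ← hp, preadditiveYoneda.map_comp,
    Category.assoc, cokernel.condition, comp_zero]

instance : Congruence (RRel C) where
  equivalence :=
    { refl := fun φ => ⟨0, by simp⟩
      symm := fun ⟨p, h⟩ => ⟨-p, by rw [Preadditive.neg_comp, h, neg_sub]⟩
      trans := fun ⟨p, h⟩ ⟨q, k⟩ => ⟨p + q, by rw [Preadditive.add_comp, h, k, sub_add_sub_cancel]⟩ }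
  comp_left := by
    rintro X Y Z f g g' ⟨p, hp⟩
    refine ⟨f.right ≫ p, ?_⟩
    rw [Category.assoc, hp, Preadditive.comp_sub]
    rfl
  comp_right := by
    rintro X Y Z g g' h ⟨p, hp⟩
    refine ⟨p ≫ h.left, ?_⟩
    rw [Category.assoc, Arrow.w h, ← Category.assoc, hp, Preadditive.sub_comp]
    rfl

def L : CategoryTheory.Quotient (RRel C) ⥤ ModCat C :=
  CategoryTheory.Quotient.lift (RRel C) (F0 C) (fun _ _ _ _ h => F0_rel C _ _ h)

lemma F0_faithful_aux {a b : Arrow C} (φ ψ : a ⟶ b) (h : (F0 C).map φ = (F0 C).map ψ) :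
    RRel C φ ψ := by
  have h' := congrArg InducedCategory.Hom.hom h
  replace h : ((F0' C).map φ : cokernel (preadditiveYoneda.map a.hom) ⟶
    cokernel (preadditiveYoneda.map b.hom)) = (F0' C).map ψ := h'
  have h2 : preadditiveYoneda.map φ.right ≫ cokernel.π (preadditiveYoneda.map b.hom)
      = preadditiveYoneda.map ψ.right ≫ cokernel.π (preadditiveYoneda.map b.hom) := by
    have h' := congrArg (fun t => cokernel.π (preadditiveYoneda.map a.hom) ≫ t) h
    dsimp only [F0'] at h'
    rwa [cokernel.π_desc, cokernel.π_desc] at h'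
  have h3 : preadditiveYoneda.map (φ.right - ψ.right) ≫ cokernel.π (preadditiveYoneda.map b.hom)
      = 0 := by
    rw [pY_map_sub, Preadditive.sub_comp, h2, sub_self]
  have e : (preadditiveYoneda.map (φ.right - ψ.right)).app (op a.right) (𝟙 a.right)
      = φ.right - ψ.right := by
    show 𝟙 a.right ≫ (φ.right - ψ.right) = φ.right - ψ.right
    rw [Category.id_comp]
  have h5 : (cokernel.π (preadditiveYoneda.map b.hom)).app (op a.right) (φ.right - ψ.right)
      = 0 := by
    calc (cokernel.π (preadditiveYoneda.map b.hom)).app (op a.right) (φ.right - ψ.right)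
        = (cokernel.π (preadditiveYoneda.map b.hom)).app (op a.right)
            ((preadditiveYoneda.map (φ.right - ψ.right)).app (op a.right) (𝟙 a.right)) :=
          (congrArg _ e).symm
      _ = ((preadditiveYoneda.map (φ.right - ψ.right)
            ≫ cokernel.π (preadditiveYoneda.map b.hom)).app (op a.right)) (𝟙 a.right) := rfl
      _ = ((0 : preadditiveYoneda.obj a.right ⟶ cokernel (preadditiveYoneda.map b.hom)).app
            (op a.right)) (𝟙 a.right) := by rw [h3]
      _ = 0 := rfl
  obtain ⟨p, hp⟩ := coker_exact b.hom a.right (φ.right - ψ.right) h5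
  exact ⟨p, hp⟩

lemma F0_full_aux (a b : Arrow C)
    (t : cokernel (preadditiveYoneda.map a.hom) ⟶ cokernel (preadditiveYoneda.map b.hom)) :
    ∃ φ : a ⟶ b, (F0' C).map φ = t := by
  set s : preadditiveYoneda.obj a.right ⟶ cokernel (preadditiveYoneda.map b.hom) :=
    cokernel.π (preadditiveYoneda.map a.hom) ≫ t with hs
  obtain ⟨g, hg⟩ := coker_surj b.hom a.right (s.app (op a.right) (𝟙 a.right))
  have hsz : preadditiveYoneda.map a.hom ≫ s = 0 := by
    rw [hs, ← Category.assoc, cokernel.condition, Limits.zero_comp]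
  have hzero : (cokernel.π (preadditiveYoneda.map b.hom)).app (op a.left) (a.hom ≫ g) = 0 := by
    calc (cokernel.π (preadditiveYoneda.map b.hom)).app (op a.left) (a.hom ≫ g)
        = (cokernel.π (preadditiveYoneda.map b.hom)).app (op a.left)
            ((preadditiveYoneda.obj b.right).map a.hom.op g) := rfl
      _ = (cokernel (preadditiveYoneda.map b.hom)).map a.hom.op
            ((cokernel.π (preadditiveYoneda.map b.hom)).app (op a.right) g) :=
          natApp (cokernel.π (preadditiveYoneda.map b.hom)) a.hom.op g
      _ = (cokernel (preadditiveYoneda.map b.hom)).map a.hom.op (s.app (op a.right) (𝟙 a.right)) := by rw [hg]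
      _ = s.app (op a.left) ((preadditiveYoneda.obj a.right).map a.hom.op (𝟙 a.right)) :=
          (natApp s a.hom.op (𝟙 a.right)).symm
      _ = s.app (op a.left) (a.hom ≫ 𝟙 a.right) := rfl
      _ = s.app (op a.left) (𝟙 a.left ≫ a.hom) := congrArg _ (by simp)
      _ = ((preadditiveYoneda.map a.hom ≫ s).app (op a.left)) (𝟙 a.left) := rfl
      _ = ((0 : preadditiveYoneda.obj a.left ⟶ cokernel (preadditiveYoneda.map b.hom)).app (op a.left)) (𝟙 a.left) := by
          rw [hsz]
      _ = 0 := rfl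
  obtain ⟨ℓ, hℓ⟩ := coker_exact b.hom a.left (a.hom ≫ g) hzero
  refine ⟨Arrow.homMk (u := ℓ) (v := g) hℓ, ?_⟩
  refine (cancel_epi (cokernel.π (preadditiveYoneda.map a.hom))).1 ?_
  dsimp only [F0']
  rw [cokernel.π_desc]
  apply yoneda_hom_ext
  calc ((preadditiveYoneda.map g ≫ cokernel.π (preadditiveYoneda.map b.hom)).app (op a.right))
        (𝟙 a.right)
      = (cokernel.π (preadditiveYoneda.map b.hom)).app (op a.right) (𝟙 a.right ≫ g) := rfl
    _ = (cokernel.π (preadditiveYoneda.map b.hom)).app (op a.right) g := by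
        rw [Category.id_comp]
    _ = s.app (op a.right) (𝟙 a.right) := hg
    _ = ((cokernel.π (preadditiveYoneda.map a.hom) ≫ t).app (op a.right)) (𝟙 a.right) := by
        rw [hs]

instance L_faithful : (L C).Faithful where
  map_injective {X Y} f g h := by
    obtain ⟨f', rfl⟩ := (Quotient.functor (RRel C)).map_surjective f
    obtain ⟨g', rfl⟩ := (Quotient.functor (RRel C)).map_surjective g
    rw [show L C = CategoryTheory.Quotient.lift (RRel C) (F0 C)
      (fun _ _ _ _ h => F0_rel C _ _ h) from rfl,
      CategoryTheory.Quotient.lift_map_functor_map, CategoryTheory.Quotient.lift_map_functor_map] at h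
    exact (CategoryTheory.Quotient.functor_map_eq_iff (RRel C) _ _).2 (F0_faithful_aux C _ _ h)

instance L_full : (L C).Full where
  map_surjective {X Y} t := by
    obtain ⟨φ, hφ⟩ := F0_full_aux C X.as Y.as t.hom
    exact ⟨(Quotient.functor (RRel C)).map φ,
      (CategoryTheory.Quotient.lift_map_functor_map (RRel C) (F0 C)
        (fun _ _ _ _ h => F0_rel C _ _ h) φ).trans (InducedCategory.hom_ext hφ)⟩

instance L_essSurj : (L C).EssSurj where
  mem_essImage F := by
    obtain ⟨X, Y, f, ⟨e⟩⟩ := F.2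
    refine ⟨(Quotient.functor (RRel C)).obj (Arrow.mk f), ⟨?_⟩⟩
    exact (ObjectProperty.ι (IsFP C)).preimageIso e.symm

instance L_equiv : (L C).IsEquivalence := {}

theorem part1 :
    ∃ e : CategoryTheory.Quotient (RRel C) ≌ ModCat C,
       ∀ a : Arrow C,
         Nonempty ((e.functor.obj ((Quotient.functor (RRel C)).obj a)).obj ≅
           cokernel (preadditiveYoneda.map a.hom)) :=
  ⟨(L C).asEquivalence, fun a => ⟨Iso.refl _⟩⟩


def G0' : Arrow C ⥤ (C ⥤ AddCommGrpCat.{v})ᵒᵖ where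
  obj a := op (cokernel (preadditiveCoyoneda.map a.hom.op))
  map {a b} φ := (cokernel.map (preadditiveCoyoneda.map b.hom.op)
      (preadditiveCoyoneda.map a.hom.op)
      (preadditiveCoyoneda.map φ.right.op) (preadditiveCoyoneda.map φ.left.op)
      (by rw [← preadditiveCoyoneda.map_comp, ← preadditiveCoyoneda.map_comp, ← op_comp, ← op_comp,
        Arrow.w])).op
  map_id a := by
    apply Quiver.Hom.unop_inj
    apply coequalizer.hom_ext
    simp
  map_comp φ ψ := by
    apply Quiver.Hom.unop_inj
    apply coequalizer.hom_ext
    simp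

def G0 : Arrow C ⥤ (CoModCat C)ᵒᵖ where
  obj a := op ⟨cokernel (preadditiveCoyoneda.map a.hom.op),
    ⟨a.left, a.right, a.hom, ⟨Iso.refl _⟩⟩⟩
  map {a b} φ := (ObjectProperty.homMk ((G0' C).map φ).unop).op
  map_id a := by
    apply Quiver.Hom.unop_inj; apply InducedCategory.hom_ext
    exact congrArg Quiver.Hom.unop ((G0' C).map_id a)
  map_comp φ ψ := by
    apply Quiver.Hom.unop_inj; apply InducedCategory.hom_ext
    exact congrArg Quiver.Hom.unop ((G0' C).map_comp φ ψ)

lemma G0_rel {a b : Arrow C} (φ ψ : a ⟶ b) (h : R'Rel C φ ψ) : (G0 C).map φ = (G0 C).map ψ := by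
  obtain ⟨p, hp⟩ := h
  suffices key : (G0' C).map φ = (G0' C).map ψ by
    apply Quiver.Hom.unop_inj; apply InducedCategory.hom_ext
    exact congrArg Quiver.Hom.unop key
  show (G0' C).map φ = (G0' C).map ψ
  apply Quiver.Hom.unop_inj
  dsimp only [G0', Quiver.Hom.unop_op]
  rw [← cancel_epi (cokernel.π (preadditiveCoyoneda.map b.hom.op))]
  rw [cokernel.π_desc, cokernel.π_desc]
  rw [← sub_eq_zero, ← Preadditive.sub_comp, ← pCoy_map_sub, ← hp, op_comp,
    preadditiveCoyoneda.map_comp, Category.assoc, cokernel.condition, comp_zero]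

instance : Congruence (R'Rel C) where
  equivalence :=
    { refl := fun φ => ⟨0, by simp⟩
      symm := fun ⟨p, h⟩ => ⟨-p, by rw [Preadditive.comp_neg, h, neg_sub]⟩
      trans := fun ⟨p, h⟩ ⟨q, k⟩ => ⟨p + q, by rw [Preadditive.comp_add, h, k, sub_add_sub_cancel]⟩ }
  comp_left := by
    rintro X Y Z f g g' ⟨p, hp⟩
    refine ⟨f.right ≫ p, ?_⟩
    rw [← Category.assoc, ← Arrow.w f, Category.assoc, hp, Preadditive.comp_sub]
    rfl
  comp_right := by
    rintro X Y Z g g' h ⟨p, hp⟩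
    refine ⟨p ≫ h.left, ?_⟩
    rw [← Category.assoc, hp, Preadditive.sub_comp]
    rfl

lemma G0_faithful_aux {a b : Arrow C} (φ ψ : a ⟶ b) (h : (G0 C).map φ = (G0 C).map ψ) :
    R'Rel C φ ψ := by
  replace h : (G0' C).map φ = (G0' C).map ψ :=
    Quiver.Hom.unop_inj (congrArg (fun k => k.unop.hom) h)
  have h1 := congrArg Quiver.Hom.unop h
  have h2 : preadditiveCoyoneda.map φ.left.op ≫ cokernel.π (preadditiveCoyoneda.map a.hom.op)
      = preadditiveCoyoneda.map ψ.left.op ≫ cokernel.π (preadditiveCoyoneda.map a.hom.op) := by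
    have h' := congrArg (fun t => cokernel.π (preadditiveCoyoneda.map b.hom.op) ≫ t) h1
    dsimp only [G0', Quiver.Hom.unop_op] at h'
    rwa [cokernel.π_desc, cokernel.π_desc] at h'
  have h3 : preadditiveCoyoneda.map (φ.left - ψ.left).op
      ≫ cokernel.π (preadditiveCoyoneda.map a.hom.op) = 0 := by
    rw [pCoy_map_sub, Preadditive.sub_comp, h2, sub_self]
  have e : (preadditiveCoyoneda.map (φ.left - ψ.left).op).app b.left (𝟙 b.left)
      = φ.left - ψ.left := by
    show (φ.left - ψ.left) ≫ 𝟙 b.left = φ.left - ψ.left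
    rw [Category.comp_id]
  have h5 : (cokernel.π (preadditiveCoyoneda.map a.hom.op)).app b.left (φ.left - ψ.left) = 0 := by
    calc (cokernel.π (preadditiveCoyoneda.map a.hom.op)).app b.left (φ.left - ψ.left)
        = (cokernel.π (preadditiveCoyoneda.map a.hom.op)).app b.left
            ((preadditiveCoyoneda.map (φ.left - ψ.left).op).app b.left (𝟙 b.left)) :=
          (congrArg _ e).symm
      _ = ((preadditiveCoyoneda.map (φ.left - ψ.left).op
            ≫ cokernel.π (preadditiveCoyoneda.map a.hom.op)).app b.left) (𝟙 b.left) := rfl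
      _ = ((0 : preadditiveCoyoneda.obj (op b.left)
            ⟶ cokernel (preadditiveCoyoneda.map a.hom.op)).app b.left) (𝟙 b.left) := by rw [h3]
      _ = 0 := rfl
  obtain ⟨p, hp⟩ := coker_exact' a.hom b.left (φ.left - ψ.left) h5
  exact ⟨p, hp⟩

lemma G0_full_aux (a b : Arrow C)
    (t : cokernel (preadditiveCoyoneda.map b.hom.op)
      ⟶ cokernel (preadditiveCoyoneda.map a.hom.op)) :
    ∃ φ : a ⟶ b, ((G0' C).map φ).unop = t := by
  set s : preadditiveCoyoneda.obj (op b.left) ⟶ cokernel (preadditiveCoyoneda.map a.hom.op) :=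
    cokernel.π (preadditiveCoyoneda.map b.hom.op) ≫ t with hs
  obtain ⟨ℓ, hℓ⟩ := coker_surj' a.hom b.left (s.app b.left (𝟙 b.left))
  have hsz : preadditiveCoyoneda.map b.hom.op ≫ s = 0 := by
    rw [hs, ← Category.assoc, cokernel.condition, Limits.zero_comp]
  have hzero : (cokernel.π (preadditiveCoyoneda.map a.hom.op)).app b.right (ℓ ≫ b.hom) = 0 := by
    calc (cokernel.π (preadditiveCoyoneda.map a.hom.op)).app b.right (ℓ ≫ b.hom)
        = (cokernel.π (preadditiveCoyoneda.map a.hom.op)).app b.right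
            ((preadditiveCoyoneda.obj (op a.left)).map b.hom ℓ) := rfl
      _ = (cokernel (preadditiveCoyoneda.map a.hom.op)).map b.hom
            ((cokernel.π (preadditiveCoyoneda.map a.hom.op)).app b.left ℓ) :=
          natApp' (cokernel.π (preadditiveCoyoneda.map a.hom.op)) b.hom ℓ
      _ = (cokernel (preadditiveCoyoneda.map a.hom.op)).map b.hom
            (s.app b.left (𝟙 b.left)) := by rw [hℓ]
      _ = s.app b.right ((preadditiveCoyoneda.obj (op b.left)).map b.hom (𝟙 b.left)) :=
          (natApp' s b.hom (𝟙 b.left)).symm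
      _ = s.app b.right (𝟙 b.left ≫ b.hom) := rfl
      _ = s.app b.right (b.hom ≫ 𝟙 b.right) := congrArg _ (by simp)
      _ = ((preadditiveCoyoneda.map b.hom.op ≫ s).app b.right) (𝟙 b.right) := rfl
      _ = ((0 : preadditiveCoyoneda.obj (op b.right)
            ⟶ cokernel (preadditiveCoyoneda.map a.hom.op)).app b.right) (𝟙 b.right) := by
          rw [hsz]
      _ = 0 := rfl
  obtain ⟨r, hr⟩ := coker_exact' a.hom b.right (ℓ ≫ b.hom) hzero
  refine ⟨Arrow.homMk (u := ℓ) (v := r) hr.symm, ?_⟩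
  dsimp only [G0', Quiver.Hom.unop_op]
  rw [← cancel_epi (cokernel.π (preadditiveCoyoneda.map b.hom.op))]
  rw [cokernel.π_desc]
  apply coyoneda_hom_ext
  calc ((preadditiveCoyoneda.map ℓ.op
          ≫ cokernel.π (preadditiveCoyoneda.map a.hom.op)).app b.left) (𝟙 b.left)
      = (cokernel.π (preadditiveCoyoneda.map a.hom.op)).app b.left (ℓ ≫ 𝟙 b.left) := rfl
    _ = (cokernel.π (preadditiveCoyoneda.map a.hom.op)).app b.left ℓ := by
        rw [Category.comp_id]
    _ = s.app b.left (𝟙 b.left) := hℓ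
    _ = ((cokernel.π (preadditiveCoyoneda.map b.hom.op) ≫ t).app b.left) (𝟙 b.left) := by
        rw [hs]

def L' : CategoryTheory.Quotient (R'Rel C) ⥤ (CoModCat C)ᵒᵖ :=
  CategoryTheory.Quotient.lift (R'Rel C) (G0 C) (fun _ _ _ _ h => G0_rel C _ _ h)

instance L'_faithful : (L' C).Faithful where
  map_injective {X Y} f g h := by
    obtain ⟨f', rfl⟩ := (Quotient.functor (R'Rel C)).map_surjective f
    obtain ⟨g', rfl⟩ := (Quotient.functor (R'Rel C)).map_surjective g
    rw [show L' C = CategoryTheory.Quotient.lift (R'Rel C) (G0 C)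
      (fun _ _ _ _ h => G0_rel C _ _ h) from rfl,
      CategoryTheory.Quotient.lift_map_functor_map,
      CategoryTheory.Quotient.lift_map_functor_map] at h
    exact (CategoryTheory.Quotient.functor_map_eq_iff (R'Rel C) _ _).2 (G0_faithful_aux C _ _ h)

instance L'_full : (L' C).Full where
  map_surjective {X Y} t := by
    obtain ⟨φ, hφ⟩ := G0_full_aux C X.as Y.as t.unop.hom
    exact ⟨(Quotient.functor (R'Rel C)).map φ,
      (CategoryTheory.Quotient.lift_map_functor_map (R'Rel C) (G0 C)
        (fun _ _ _ _ h => G0_rel C _ _ h) φ).trans (Quiver.Hom.unop_inj (InducedCategory.hom_ext hφ))⟩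

instance L'_essSurj : (L' C).EssSurj where
  mem_essImage F := by
    obtain ⟨X, Y, f, ⟨e⟩⟩ := F.unop.2
    refine ⟨(Quotient.functor (R'Rel C)).obj (Arrow.mk f), ⟨?_⟩⟩
    exact (((ObjectProperty.ι (IsFPCo C)).preimageIso
      (X := (⟨cokernel (preadditiveCoyoneda.map f.op), ⟨X, Y, f, ⟨Iso.refl _⟩⟩⟩ : CoModCat C))
      (Y := F.unop) e.symm).op).symm

instance L'_equiv : (L' C).IsEquivalence := {}

theorem part2 :
    ∃ e : CategoryTheory.Quotient (R'Rel C) ≌ (CoModCat C)ᵒᵖ,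
       ∀ a : Arrow C,
         Nonempty (((e.functor.obj ((Quotient.functor (R'Rel C)).obj a)).unop).obj ≅
           cokernel (preadditiveCoyoneda.map a.hom.op)) :=
  ⟨(L' C).asEquivalence, fun a => ⟨Iso.refl _⟩⟩

end

/-- `Mor(C)/R ≃ mod-C` via `f ↦ Coker C(-, f)`, and
`Mor(C)/R' ≃ (mod-Cᵒᵖ)ᵒᵖ` via `f ↦ Coker C(f, -)`. -/
theorem statement2 (C : Type u) [Category.{v} C] [Preadditive C] :
    (∃ e : CategoryTheory.Quotient (RRel C) ≌ ModCat C,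
       ∀ a : Arrow C,
         Nonempty ((e.functor.obj ((Quotient.functor (RRel C)).obj a)).obj ≅
           cokernel (preadditiveYoneda.map a.hom))) ∧
    (∃ e : CategoryTheory.Quotient (R'Rel C) ≌ (CoModCat C)ᵒᵖ,
       ∀ a : Arrow C,
         Nonempty (((e.functor.obj ((Quotient.functor (R'Rel C)).obj a)).unop).obj ≅
           cokernel (preadditiveCoyoneda.map a.hom.op))) :=
  ⟨part1 C, part2 C⟩

end Paper
end

section
/- Let C be an additive category and D a contravariantly finite full subcategory of C. Then the category mod-(C/[D]) of finitely presented modules over the quotient category C/[D] is equivalent to the full subcategory mod-_0 C of mod-C consisting of finitely presented C-modules F with F(D) = 0 for all D in D. -/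
open CategoryTheory CategoryTheory.Limits Opposite ZeroObject CategoryTheory.Pretriangulated

universe w v u

namespace Paper

/-- A full subcategory (given by its membership predicate `P`) is contravariantly finite
if every object admits a right approximation by an object satisfying `P`. -/
def HasRightApprox (C : Type u) [Category.{v} C] (P : C → Prop) : Prop :=
  ∀ X : C, ∃ (D : C) (_ : P D) (f : D ⟶ X),
    ∀ (D' : C), P D' → ∀ g : D' ⟶ X, ∃ h : D' ⟶ D, h ≫ f = g



/-! ### Auxiliary machinery -/

noncomputable section Aux

open QuotientAddGroup

section GrpLemmas

variable {M N K : AddCommGrpCat.{v}}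

lemma eq_zero_of_isZero {G : AddCommGrpCat.{v}} (h : IsZero G) (x : G) : x = 0 := by
  have h1 : (𝟙 G) = (0 : G ⟶ G) := h.eq_of_src _ _
  calc x = (𝟙 G) x := rfl
    _ = (0 : G ⟶ G) x := by rw [h1]
    _ = 0 := rfl

def grpPresIsColimit (u v : M ⟶ N) (π : N ⟶ K) (w : u ≫ π = v ≫ π)
    (surj : Function.Surjective π)
    (ker : ∀ n : N, π n = 0 → ∃ m : M, u m - v m = n) :
    IsColimit (Cofork.ofπ π w) := by
  set S : AddSubgroup N := AddMonoidHom.range (u.hom - v.hom) with hS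
  have hmemS : ∀ n : N, n ∈ S ↔ ∃ m : M, u m - v m = n := by
    intro n
    constructor
    · rintro ⟨m, rfl⟩; exact ⟨m, rfl⟩
    · rintro ⟨m, rfl⟩; exact ⟨m, rfl⟩
  have key : ∀ {W : AddCommGrpCat.{v}} (τ : N ⟶ W), u ≫ τ = v ≫ τ →
      ∀ n ∈ S, τ n = 0 := by
    intro W τ hw n hn
    obtain ⟨m, rfl⟩ := (hmemS n).1 hn
    have h : τ (u m) = τ (v m) := congrArg (fun φ : M ⟶ W => φ m) hw
    rw [map_sub]
    exact sub_eq_zero_of_eq h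
  have hπS : ∀ n ∈ S, π n = 0 := key π w
  let φ : (N ⧸ S) →+ K := QuotientAddGroup.lift S π.hom hπS
  have hφbij : Function.Bijective φ := by
    constructor
    · rw [injective_iff_map_eq_zero]
      intro x hx
      obtain ⟨n, rfl⟩ := QuotientAddGroup.mk'_surjective S x
      have hn : π n = 0 := hx
      exact (QuotientAddGroup.eq_zero_iff n).2 ((hmemS n).2 (ker n hn))
    · intro k
      obtain ⟨n, rfl⟩ := surj k
      exact ⟨QuotientAddGroup.mk n, rfl⟩
  let e : (N ⧸ S) ≃+ K := AddEquiv.ofBijective φ hφbij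
  have he : ∀ n : N, e.symm (π n) = QuotientAddGroup.mk n := by
    intro n
    apply e.injective
    simp only [AddEquiv.apply_symm_apply]
    rfl
  have hπepi : Epi π := (AddCommGrpCat.epi_iff_surjective π).2 surj
  let desc : ∀ s : Cofork u v, K ⟶ s.pt := fun s =>
    AddCommGrpCat.ofHom (AddMonoidHom.comp
      (QuotientAddGroup.lift S s.π.hom (key s.π s.condition))
      e.symm.toAddMonoidHom)
  have hdesc : ∀ (s : Cofork u v) (n : N), desc s (π n) = s.π n := by
    intro s n
    show (QuotientAddGroup.lift S s.π.hom (key s.π s.condition)) (e.symm (π n)) = s.π n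
    rw [he n]
    rfl
  refine Cofork.IsColimit.mk _ desc (fun s => ?_) (fun s m hm => ?_)
  · ext n
    simpa using hdesc s n
  · rw [← cancel_epi π]
    ext n
    have h2 : (Cofork.ofπ π w).π ≫ m = s.π := hm
    have h1 : (π ≫ m) n = s.π n := congrArg (fun ψ : N ⟶ s.pt => ψ n) h2
    have h3 : (π ≫ desc s) n = s.π n := hdesc s n
    simp only [comp_apply] at h1 h3 ⊢
    rw [h1, h3]

lemma grpPresOfIsColimit (u v : M ⟶ N) (π : N ⟶ K) (w : u ≫ π = v ≫ π)
    (l : IsColimit (Cofork.ofπ π w)) :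
    Function.Surjective π ∧ ∀ n : N, π n = 0 → ∃ m : M, u m - v m = n := by
  set S : AddSubgroup N := AddMonoidHom.range (u.hom - v.hom) with hS
  have w₀ : u ≫ AddCommGrpCat.ofHom (QuotientAddGroup.mk' S) =
      v ≫ AddCommGrpCat.ofHom (QuotientAddGroup.mk' S) := by
    ext m
    show QuotientAddGroup.mk' S (u m) = QuotientAddGroup.mk' S (v m)
    rw [QuotientAddGroup.mk'_eq_mk']
    exact ⟨-(u m - v m), AddSubgroup.neg_mem S ⟨m, rfl⟩, by abel⟩
  have surj₀ : Function.Surjective (AddCommGrpCat.ofHom (QuotientAddGroup.mk' S)) :=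
    QuotientAddGroup.mk'_surjective S
  have ker₀ : ∀ n : N, AddCommGrpCat.ofHom (QuotientAddGroup.mk' S) n = 0 →
      ∃ m : M, u m - v m = n := by
    intro n hn
    have : n ∈ S := (QuotientAddGroup.eq_zero_iff n).1 hn
    obtain ⟨m, hm⟩ := this
    exact ⟨m, hm⟩
  have l₀ : IsColimit (Cofork.ofπ (AddCommGrpCat.ofHom (QuotientAddGroup.mk' S)) w₀) :=
    grpPresIsColimit u v _ w₀ surj₀ ker₀
  let e : K ≅ AddCommGrpCat.of (N ⧸ S) := l.coconePointUniqueUpToIso l₀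
  have hcomm : π ≫ e.hom = AddCommGrpCat.ofHom (QuotientAddGroup.mk' S) := by
    have := l.comp_coconePointUniqueUpToIso_hom l₀ WalkingParallelPair.one
    simpa using this
  have hbij : Function.Bijective e.hom := ConcreteCategory.bijective_of_isIso e.hom
  have happ : ∀ n : N, e.hom (π n) = QuotientAddGroup.mk' S n := by
    intro n
    have := congrArg (fun ψ : N ⟶ AddCommGrpCat.of (N ⧸ S) => ψ n) hcomm
    simpa using this
  constructor
  · intro k
    obtain ⟨n, hn⟩ := surj₀ (e.hom k)
    refine ⟨n, hbij.1 ?_⟩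
    rw [happ n]
    exact hn
  · intro n hn
    have : QuotientAddGroup.mk' S n = 0 := by rw [← happ n, hn, map_zero]
    obtain ⟨m, hm⟩ := (QuotientAddGroup.eq_zero_iff n).1 this
    exact ⟨m, hm⟩

end GrpLemmas

section Pres

variable {A' : Type u} [Category.{v} A'] [Preadditive A']

/-- `p` exhibits `F` as the cokernel of precomposition with `f`. -/
def IsPres {A B : A'} (f : A ⟶ B) (F : A'ᵒᵖ ⥤ AddCommGrpCat.{v})
    (p : preadditiveYoneda.obj B ⟶ F) : Prop :=
  (∀ X : A', Function.Surjective (p.app (op X))) ∧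
  (∀ (X : A') (g : X ⟶ B), p.app (op X) g = 0 ↔ ∃ h : X ⟶ A, h ≫ f = g)

variable {A B : A'} {f : A ⟶ B} {F F' : A'ᵒᵖ ⥤ AddCommGrpCat.{v}} {p : preadditiveYoneda.obj B ⟶ F}

@[simp] lemma pY_map_app_apply (X : A'ᵒᵖ) (g : (preadditiveYoneda.obj A).obj X) :
    (preadditiveYoneda.map f).app X g = ((show X.unop ⟶ A from g) ≫ f : X.unop ⟶ B) := rfl

lemma IsPres.w (hp : IsPres f F p) :
    preadditiveYoneda.map f ≫ p = (0 : preadditiveYoneda.obj A ⟶ preadditiveYoneda.obj B) ≫ p := by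
  ext X g
  have : p.app X (g ≫ f) = 0 := (hp.2 X.unop (g ≫ f)).2 ⟨g, rfl⟩
  simpa using this

def IsPres.isColimit (hp : IsPres f F p) : IsColimit (Cofork.ofπ p hp.w) := by
  apply evaluationJointlyReflectsColimits
  intro X
  refine (isColimitMapCoconeCoforkEquiv ((evaluation A'ᵒᵖ AddCommGrpCat.{v}).obj X) hp.w).symm ?_
  apply grpPresIsColimit
  · exact hp.1 X.unop
  · intro n hn
    obtain ⟨h, hh⟩ := (hp.2 X.unop n).1 hn
    refine ⟨h, ?_⟩
    show (preadditiveYoneda.map f).app X h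
      - ((0 : preadditiveYoneda.obj A ⟶ preadditiveYoneda.obj B)).app X h = n
    rw [Limits.zero_app]
    erw [AddMonoidHom.zero_apply]
    exact (sub_zero _).trans hh

lemma isPres_ofIsColimit {w' : preadditiveYoneda.map f ≫ p =
      (0 : preadditiveYoneda.obj A ⟶ preadditiveYoneda.obj B) ≫ p}
    (l : IsColimit (Cofork.ofπ p w')) : IsPres f F p := by
  have key : ∀ X : A', Function.Surjective (p.app (op X)) ∧
      ∀ g : X ⟶ B, p.app (op X) g = 0 → ∃ h : X ⟶ A, h ≫ f = g := by
    intro X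
    have l' := isColimitOfPreserves ((evaluation A'ᵒᵖ AddCommGrpCat.{v}).obj (op X)) l
    have lX := (isColimitMapCoconeCoforkEquiv ((evaluation A'ᵒᵖ AddCommGrpCat.{v}).obj (op X)) w') l'
    obtain ⟨surj, ker⟩ := grpPresOfIsColimit _ _ _ _ lX
    refine ⟨surj, ?_⟩
    intro g hg
    obtain ⟨h, hh⟩ := ker g hg
    refine ⟨h, ?_⟩
    have : (preadditiveYoneda.map f).app (op X) h
        - ((0 : preadditiveYoneda.obj A ⟶ preadditiveYoneda.obj B)).app (op X) h = g := hh
    rw [Limits.zero_app] at this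
    erw [AddMonoidHom.zero_apply] at this
    simp at this; exact (sub_zero _).symm.trans this
  constructor
  · exact fun X => (key X).1
  · intro X g
    refine ⟨(key X).2 g, ?_⟩
    rintro ⟨h, rfl⟩
    have := congrArg (fun ψ : preadditiveYoneda.obj A ⟶ F => ψ.app (op X) h) w'
    simp at this; exact this

lemma isPres_iso (e : F ≅ F') (hp : IsPres f F p) : IsPres f F' (p ≫ e.hom) := by
  have hinvhom : ∀ (X : A'ᵒᵖ) (y : F'.obj X), e.hom.app X (e.inv.app X y) = y := by
    intro X y
    rw [← comp_apply, Iso.inv_hom_id_app]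
    rfl
  have hhominv : ∀ (X : A'ᵒᵖ) (y : F.obj X), e.inv.app X (e.hom.app X y) = y := by
    intro X y
    rw [← comp_apply, Iso.hom_inv_id_app]
    rfl
  constructor
  · intro X y
    obtain ⟨g, hg⟩ := hp.1 X (e.inv.app (op X) y)
    refine ⟨g, ?_⟩
    show e.hom.app (op X) (p.app (op X) g) = y
    rw [hg, hinvhom]
  · intro X g
    rw [← hp.2 X g]
    constructor
    · intro hg
      have : e.inv.app (op X) (e.hom.app (op X) (p.app (op X) g)) = e.inv.app (op X) 0 :=
        congrArg _ hg
      rw [hhominv, map_zero] at this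
      exact this
    · intro hg
      show e.hom.app (op X) (p.app (op X) g) = 0
      rw [hg, map_zero]

lemma exists_isPres_of_isFP (hF : IsFP A' F) :
    ∃ (A B : A') (f : A ⟶ B) (p : preadditiveYoneda.obj B ⟶ F), IsPres f F p := by
  obtain ⟨A, B, f, ⟨e⟩⟩ := hF
  have l := cokernelIsCokernel (preadditiveYoneda.map f)
  have hp : IsPres f (cokernel (preadditiveYoneda.map f)) (cokernel.π (preadditiveYoneda.map f)) :=
    isPres_ofIsColimit l
  exact ⟨A, B, f, _, isPres_iso e.symm hp⟩

lemma isFP_of_isPres (hp : IsPres f F p) : IsFP A' F := by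
  have i := IsColimit.coconePointUniqueUpToIso hp.isColimit
      (cokernelIsCokernel (preadditiveYoneda.map f))
  exact ⟨A, B, f, ⟨i⟩⟩

end Pres

end Aux

section Main

variable {C : Type u} [Category.{v} C] [Preadditive C] (P : C → Prop)

lemma factor_mem_ideal {X Y Z : C} (hZ : P Z) (u : X ⟶ Z) (v : Z ⟶ Y) :
    u ≫ v ∈ idealOf C P X Y :=
  AddSubgroup.subset_closure ⟨Z, hZ, u, v, rfl⟩

lemma hom_subsingleton {D : C} (hD : P D) (q : IdealQuot C P) :
    Subsingleton ((Quotient.functor (idealRel C P)).obj D ⟶ q) := by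
  constructor
  intro f g
  obtain ⟨f₀, rfl⟩ := Quot.exists_rep f
  obtain ⟨g₀, rfl⟩ := Quot.exists_rep g
  have : idealRel C P f₀ g₀ := by
    refine AddSubgroup.sub_mem _ ?_ ?_
    · have := factor_mem_ideal P hD (𝟙 D) f₀
      simp only [Category.id_comp] at this; exact this
    · have := factor_mem_ideal P hD (𝟙 D) g₀
      simp only [Category.id_comp] at this; exact this
  exact CategoryTheory.Quotient.sound _ this

lemma approx_factor {D₀ B : C} (d : D₀ ⟶ B) (hD₀ : P D₀)
    (hd : ∀ (D' : C), P D' → ∀ g : D' ⟶ B, ∃ h : D' ⟶ D₀, h ≫ d = g)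
    {X : C} {k : X ⟶ B} (hk : k ∈ idealOf C P X B) :
    ∃ v : X ⟶ D₀, v ≫ d = k := by
  have hle : idealOf C P X B ≤ AddMonoidHom.range (Preadditive.rightComp X d) := by
    rw [idealOf, AddSubgroup.closure_le]
    rintro g ⟨W, hW, u, v, rfl⟩
    obtain ⟨h, hh⟩ := hd W hW v
    exact ⟨u ≫ h, by simp [Preadditive.rightComp, hh]⟩
  obtain ⟨v, hv⟩ := hle hk
  exact ⟨v, hv⟩

variable {P}

section Kill

variable {A B : C} {f : A ⟶ B} {F : Cᵒᵖ ⥤ AddCommGrpCat.{v}} {p : preadditiveYoneda.obj B ⟶ F}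

lemma pres_kill (hp : IsPres f F p)
    (hvan : ∀ D : C, P D → IsZero (F.obj (op D)))
    {X : C} {k : X ⟶ B} (hk : k ∈ idealOf C P X B) :
    p.app (op X) k = 0 := by
  have hle : idealOf C P X B ≤ AddMonoidHom.ker (show (X ⟶ B) →+ F.obj (op X) from (p.app (op X)).hom) := by
    rw [idealOf, AddSubgroup.closure_le]
    rintro g ⟨W, hW, u, v, rfl⟩
    have hnat : p.app (op X) ((preadditiveYoneda.obj B).map u.op v)
        = F.map u.op (p.app (op W) v) :=
      congrArg (fun ψ : (preadditiveYoneda.obj B).obj (op W) ⟶ F.obj (op X) => ψ v)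
        (p.naturality u.op)
    have hv : p.app (op W) v = 0 := eq_zero_of_isZero (hvan W hW) _
    have : p.app (op X) (u ≫ v) = F.map u.op (p.app (op W) v) := hnat
    rw [hv, map_zero] at this
    exact this
  exact hle hk

lemma pres_wd (hp : IsPres f F p)
    (hvan : ∀ D : C, P D → IsZero (F.obj (op D))) :
    ∀ ⦃X Y : C⦄ (g₁ g₂ : X ⟶ Y), idealRel C P g₁ g₂ → F.map g₁.op = F.map g₂.op := by
  intro X Y g₁ g₂ hrel
  ext x
  obtain ⟨k, rfl⟩ := hp.1 Y x
  change Y ⟶ B at k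
  have h₁ : F.map g₁.op (p.app (op Y) k) = p.app (op X) (g₁ ≫ k) :=
    (congrArg (fun ψ : (preadditiveYoneda.obj B).obj (op Y) ⟶ F.obj (op X) => ψ k)
      (p.naturality g₁.op)).symm
  have h₂ : F.map g₂.op (p.app (op Y) k) = p.app (op X) (g₂ ≫ k) :=
    (congrArg (fun ψ : (preadditiveYoneda.obj B).obj (op Y) ⟶ F.obj (op X) => ψ k)
      (p.naturality g₂.op)).symm
  rw [h₁, h₂]
  have hmem : g₁ ≫ k - g₂ ≫ k ∈ idealOf C P X B := by
    rw [← Preadditive.sub_comp]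
    exact idealOf_comp_right P k hrel
  have := pres_kill hp hvan hmem
  erw [map_sub] at this
  exact sub_eq_zero.1 this

end Kill

section Lift

variable (P) in
/-- Lift of a functor killing the ideal to the quotient category. -/
def liftObj (F : Cᵒᵖ ⥤ AddCommGrpCat.{v})
    (hF : ∀ ⦃X Y : C⦄ (g₁ g₂ : X ⟶ Y), idealRel C P g₁ g₂ → F.map g₁.op = F.map g₂.op) :
    (IdealQuot C P)ᵒᵖ ⥤ AddCommGrpCat.{v} where
  obj q := F.obj (op q.unop.as)
  map {q q'} f := Quot.lift (fun g => F.map g.op)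
    (fun g₁ g₂ h => hF g₁ g₂ ((HomRel.compClosure_iff_self _ _ _).1 h)) f.unop
  map_id q := by
    show F.map (𝟙 (op q.unop.as)) = _
    rw [F.map_id]
  map_comp {q q' q''} f g := by
    obtain ⟨f₁⟩ := f
    obtain ⟨g₁⟩ := g
    obtain ⟨f₀, rfl⟩ := Quot.exists_rep f₁
    obtain ⟨g₀, rfl⟩ := Quot.exists_rep g₁
    show F.map (g₀ ≫ f₀).op = _
    rw [op_comp, F.map_comp]
    rfl

lemma isFP_liftObj {A B : C} {f : A ⟶ B} {F : Cᵒᵖ ⥤ AddCommGrpCat.{v}}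
    {p : preadditiveYoneda.obj B ⟶ F} (hp : IsPres f F p)
    (hvan : ∀ D : C, P D → IsZero (F.obj (op D)))
    (hwd : ∀ ⦃X Y : C⦄ (g₁ g₂ : X ⟶ Y), idealRel C P g₁ g₂ → F.map g₁.op = F.map g₂.op) :
    IsFP (IdealQuot C P) (liftObj P F hwd) := by
  set π := Quotient.functor (idealRel C P) with hπdef
  have pkill : ∀ {X : C} (k₁ k₂ : X ⟶ B), HomRel.CompClosure (idealRel C P) k₁ k₂ →
      p.app (op X) k₁ = p.app (op X) k₂ := by
    intro X k₁ k₂ h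
    have hrel : idealRel C P k₁ k₂ := (HomRel.compClosure_iff_self _ _ _).1 h
    have hz := pres_kill hp hvan hrel
    erw [map_sub] at hz
    exact sub_eq_zero.1 hz
  let papp : ∀ q : (IdealQuot C P)ᵒᵖ,
      (preadditiveYoneda.obj (π.obj B)).obj q ⟶ (liftObj P F hwd).obj q := fun q =>
    AddCommGrpCat.ofHom (AddMonoidHom.mk'
      (fun kb => Quot.lift (fun k : q.unop.as ⟶ B => p.app (op q.unop.as) k) pkill kb)
      (by
        intro x y
        obtain ⟨a, rfl⟩ := Quot.exists_rep x
        obtain ⟨b, rfl⟩ := Quot.exists_rep y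
        show Quot.lift (fun k : q.unop.as ⟶ B => p.app (op q.unop.as) k) pkill
            ((π.map a + π.map b : π.obj q.unop.as ⟶ π.obj B)) = _
        rw [← Functor.map_add]
        show p.app (op q.unop.as) (a + b) = _
        erw [map_add]))
  let p' : preadditiveYoneda.obj (π.obj B) ⟶ liftObj P F hwd :=
    { app := papp
      naturality := by
        intro q q' h
        obtain ⟨h₁⟩ := h
        obtain ⟨h₀, rfl⟩ := Quot.exists_rep h₁
        ext kb
        obtain ⟨k, rfl⟩ := Quot.exists_rep kb
        show p.app (op q'.unop.as) (h₀ ≫ k) = F.map h₀.op (p.app (op q.unop.as) k)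
        exact congrArg
          (fun ψ : (preadditiveYoneda.obj B).obj (op q.unop.as) ⟶ F.obj (op q'.unop.as) => ψ k)
          (p.naturality h₀.op) }
  have hp' : IsPres (π.map f) (liftObj P F hwd) p' := by
    constructor
    · intro q x
      obtain ⟨k, hk⟩ := hp.1 q.as x
      exact ⟨Quot.mk _ k, hk⟩
    · intro q gb
      constructor
      · intro h0
        obtain ⟨k, rfl⟩ := Quot.exists_rep gb
        have hk : p.app (op q.as) k = 0 := by simp only [p', papp] at h0; exact h0
        obtain ⟨h, hh⟩ := (hp.2 q.as k).1 hk
        refine ⟨π.map h, ?_⟩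
        show π.map h ≫ π.map f = Quot.mk _ k
        rw [← Functor.map_comp, hh]
        rfl
      · rintro ⟨hb, rfl⟩
        obtain ⟨h, rfl⟩ := Quot.exists_rep hb
        show p.app (op q.as) (h ≫ f) = 0
        exact (hp.2 q.as _).2 ⟨h, rfl⟩
  exact isFP_of_isPres hp'

end Lift


section Restr

variable [HasBinaryBiproducts C]

lemma restr_mem (hP : HasRightApprox C P) (F : (IdealQuot C P)ᵒᵖ ⥤ AddCommGrpCat.{v})
    (hF : IsFP (IdealQuot C P) F) :
    IsFP C ((Quotient.functor (idealRel C P)).op ⋙ F) ∧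
      ∀ D : C, P D → IsZero (((Quotient.functor (idealRel C P)).op ⋙ F).obj (op D)) := by
  set π := Quotient.functor (idealRel C P) with hπdef
  obtain ⟨A', B', fb, p, hp⟩ := exists_isPres_of_isFP hF
  have hvan : ∀ D : C, P D → IsZero ((π.op ⋙ F).obj (op D)) := by
    intro D hD
    have hsub : Subsingleton (π.obj D ⟶ B') := hom_subsingleton P hD B'
    have hs2 : Subsingleton ((π.op ⋙ F).obj (op D)) := by
      constructor
      intro a b
      obtain ⟨x, rfl⟩ := hp.1 (π.obj D) a
      obtain ⟨y, rfl⟩ := hp.1 (π.obj D) b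
      exact congrArg _ (hsub.allEq x y)
    exact @AddCommGrpCat.isZero_of_subsingleton _ hs2
  refine ⟨?_, hvan⟩
  obtain ⟨g, hg⟩ := Quot.exists_rep fb
  obtain ⟨D₀, hD₀, d, hd⟩ := hP B'.as
  let πhom : ∀ X : C, (X ⟶ B'.as) →+ (π.obj X ⟶ B') := fun X =>
    AddMonoidHom.mk' (fun k => π.map k) (fun a b => Functor.map_add (F := π))
  let p' : preadditiveYoneda.obj B'.as ⟶ π.op ⋙ F :=
    { app := fun X => AddCommGrpCat.ofHom
        ((p.app (op (π.obj X.unop))).hom.comp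
          (πhom X.unop))
      naturality := by
        intro X Y u
        ext k
        change X.unop ⟶ B'.as at k
        show p.app (op (π.obj Y.unop)) (π.map (u.unop ≫ k))
            = F.map (π.map u.unop).op (p.app (op (π.obj X.unop)) (π.map k))
        rw [Functor.map_comp]
        exact congrArg
          (fun ψ : (preadditiveYoneda.obj B').obj (op (π.obj X.unop))
              ⟶ F.obj (op (π.obj Y.unop)) => ψ (π.map k))
          (p.naturality (π.map u.unop).op) }
  have hp' : IsPres (biprod.desc g d) (π.op ⋙ F) p' := by
    constructor
    · intro X x
      obtain ⟨kb, hkb⟩ := hp.1 (π.obj X) x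
      obtain ⟨k, rfl⟩ := Quot.exists_rep kb
      exact ⟨k, hkb⟩
    · intro X k
      constructor
      · intro h0
        have h0' : p.app (op (π.obj X)) (π.map k) = 0 := h0
        obtain ⟨hb, hhb⟩ := (hp.2 (π.obj X) (π.map k)).1 h0'
        obtain ⟨u, rfl⟩ := Quot.exists_rep hb
        rw [← hg] at hhb
        have hcomp : π.map ((u ≫ g : X ⟶ B'.as)) = π.map k := hhb
        have hrel : idealRel C P ((u ≫ g : X ⟶ B'.as)) k :=
          (Quotient.functor_map_eq_iff _ _ _).1 hcomp
        have hmem : k - (u ≫ g : X ⟶ B'.as) ∈ idealOf C P X B'.as := by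
          have := AddSubgroup.neg_mem _ hrel
          simpa [idealRel, neg_sub] using this
        obtain ⟨v, hv⟩ := approx_factor P d hD₀ hd hmem
        refine ⟨biprod.lift (u : X ⟶ A'.as) v, ?_⟩
        rw [biprod.lift_desc, hv]
        abel
      · rintro ⟨h, rfl⟩
        have hdec : biprod.desc g d
            = (biprod.fst ≫ g + biprod.snd ≫ d : A'.as ⊞ D₀ ⟶ B'.as) := by
          apply biprod.hom_ext' <;> simp
        have hzero : π.map ((h ≫ biprod.snd) ≫ d) = 0 := by
          have hrel0 : idealRel C P ((h ≫ biprod.snd) ≫ d) 0 := by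
            show _ - _ ∈ _
            rw [sub_zero]
            exact factor_mem_ideal P hD₀ (h ≫ biprod.snd) d
          have heq := (Quotient.functor_map_eq_iff (idealRel C P) _ _).2 hrel0
          rw [heq, Functor.map_zero]
        show p.app (op (π.obj X)) (π.map (h ≫ biprod.desc g d)) = 0
        rw [hdec, Preadditive.comp_add, Functor.map_add, ← Category.assoc, ← Category.assoc,
          hzero, add_zero, Functor.map_comp]
        refine (hp.2 (π.obj X) _).2 ⟨π.map (h ≫ biprod.fst), ?_⟩
        rw [← hg]
        rfl
  exact isFP_of_isPres hp'

end Restr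

section Assemble

lemma wd_of_mem {F : Cᵒᵖ ⥤ AddCommGrpCat.{v}} (h1 : IsFP C F)
    (h2 : ∀ D : C, P D → IsZero (F.obj (op D))) :
    ∀ ⦃X Y : C⦄ (g₁ g₂ : X ⟶ Y), idealRel C P g₁ g₂ → F.map g₁.op = F.map g₂.op := by
  obtain ⟨A, B, f, p, hp⟩ := exists_isPres_of_isFP h1
  exact pres_wd hp h2

lemma lift_mem {F : Cᵒᵖ ⥤ AddCommGrpCat.{v}} (h1 : IsFP C F)
    (h2 : ∀ D : C, P D → IsZero (F.obj (op D))) :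
    IsFP (IdealQuot C P) (liftObj P F (wd_of_mem h1 h2)) := by
  obtain ⟨A, B, f, p, hp⟩ := exists_isPres_of_isFP h1
  exact isFP_liftObj hp h2 _

/-- Promote an isomorphism of underlying objects to the full subcategory. -/
def subIso {D : Type*} [Category D] {Z : D → Prop} {X Y : ObjectProperty.FullSubcategory Z}
    (e : X.obj ≅ Y.obj) : X ≅ Y :=
  ObjectProperty.isoMk _ e

variable [HasBinaryBiproducts C]

/-- The restriction functor `mod-(C/[D]) ⥤ mod-C`. -/
def Lfun (hP : HasRightApprox C P) :
    ModCat (IdealQuot C P) ⥤ ObjectProperty.FullSubcategory (fun F : Cᵒᵖ ⥤ AddCommGrpCat.{v} =>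
      IsFP C F ∧ ∀ D : C, P D → IsZero (F.obj (op D))) :=
  ObjectProperty.lift _
    (ObjectProperty.ι _ ⋙
      (Functor.whiskeringLeft _ _ _).obj (Quotient.functor (idealRel C P)).op)
    (fun G => restr_mem hP G.obj G.property)

/-- The lifting functor `mod-C ⊇ mod₀-C ⥤ mod-(C/[D])`. -/
def Kfun : ObjectProperty.FullSubcategory (fun F : Cᵒᵖ ⥤ AddCommGrpCat.{v} =>
      IsFP C F ∧ ∀ D : C, P D → IsZero (F.obj (op D))) ⥤ ModCat (IdealQuot C P) where
  obj F := ⟨liftObj P F.obj (wd_of_mem F.property.1 F.property.2),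
    lift_mem F.property.1 F.property.2⟩
  map {F G} α := { hom :=
    { app := fun q => α.hom.app (op q.unop.as)
      naturality := by
        intro q q' h
        obtain ⟨h₁⟩ := h
        obtain ⟨h₀, rfl⟩ := Quot.exists_rep h₁
        exact α.hom.naturality h₀.op } }
  map_id F := rfl
  map_comp α β := rfl

theorem main_statement (hP : HasRightApprox C P) :
    Nonempty (ModCat (IdealQuot C P) ≌
      ObjectProperty.FullSubcategory (fun F : Cᵒᵖ ⥤ AddCommGrpCat.{v} =>
        IsFP C F ∧ ∀ D : C, P D → IsZero (F.obj (op D)))) := by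
  refine ⟨CategoryTheory.Equivalence.mk (Lfun hP) Kfun ?_ ?_⟩
  · -- unit
    refine NatIso.ofComponents (fun G => subIso (NatIso.ofComponents
      (fun q => Iso.refl _) ?_)) ?_
    · intro q q' h
      obtain ⟨h₁⟩ := h
      obtain ⟨h₀, rfl⟩ := Quot.exists_rep h₁
      simp only [Iso.refl_hom, Category.comp_id, Category.id_comp]
      rfl
    · intro G G' α
      apply ObjectProperty.hom_ext
      apply NatTrans.ext
      funext q
      show α.hom.app q ≫ 𝟙 _ = 𝟙 _ ≫ _
      simp only [Category.comp_id, Category.id_comp]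
      rfl
  · -- counit
    refine NatIso.ofComponents (fun F => subIso (NatIso.ofComponents
      (fun X => Iso.refl _) ?_)) ?_
    · intro X Y u
      simp only [Iso.refl_hom, Category.comp_id, Category.id_comp]
      rfl
    · intro F F' α
      apply ObjectProperty.hom_ext
      apply NatTrans.ext
      funext X
      show _ ≫ 𝟙 _ = 𝟙 _ ≫ α.hom.app X
      simp only [Category.comp_id, Category.id_comp]
      rfl

end Assemble

end Main

/-- For a contravariantly finite full subcategory `D` of an additive
category `C`, the category `mod-(C/[D])` is equivalent to the full subcategory of `mod-C`
of finitely presented functors vanishing on `D`. -/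
theorem statement3 (C : Type u) [Category.{v} C] [Preadditive C] [HasZeroObject C]
    [HasBinaryBiproducts C] (P : C → Prop) (hP : HasRightApprox C P) :
    Nonempty (ModCat (IdealQuot C P) ≌
      ObjectProperty.FullSubcategory (fun F : Cᵒᵖ ⥤ AddCommGrpCat.{v} =>
        IsFP C F ∧ ∀ D : C, P D → IsZero (F.obj (op D)))) := by
  exact main_statement hP

end Paper
end

section
/- Let C be a triangulated category with suspension functor Σ and let M be a cluster-tilting subcategory of C, i.e. M is rigid (C(M, ΣM') = 0 for all M, M' in M) and every object X of C admits a triangle M1 --> M2 --> X --> ΣM1 with M1, M2 in M. Then the quotient category C/[ΣM] is equivalent to mod-M. -/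
open CategoryTheory CategoryTheory.Limits Opposite ZeroObject CategoryTheory.Pretriangulated

universe w v u

namespace Paper

section Aux
variable {C : Type u} [Category.{v} C] [Preadditive C] (M : C → Prop)

noncomputable def res : C ⥤ ((ObjectProperty.FullSubcategory M)ᵒᵖ ⥤ AddCommGrpCat.{v}) :=
  preadditiveYoneda ⋙
    (Functor.whiskeringLeft (ObjectProperty.FullSubcategory M)ᵒᵖ Cᵒᵖ AddCommGrpCat.{v}).obj (ObjectProperty.ι M).op

variable {M}

noncomputable def proj {X : C} (N₂ : ObjectProperty.FullSubcategory M) (g : N₂.obj ⟶ X) :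
    preadditiveYoneda.obj N₂ ⟶ (res M).obj X where
  app M' := AddCommGrpCat.ofHom (AddMonoidHom.mk' (fun h₂ : M'.unop ⟶ N₂ => h₂.hom ≫ g)
    (fun a b => Preadditive.add_comp _ _ _ a.hom b.hom g))
  naturality M' M'' α := by
    ext h₂
    exact Category.assoc _ _ _

lemma proj_app {X : C} (N₂ : ObjectProperty.FullSubcategory M) (g : N₂.obj ⟶ X) (M' : (ObjectProperty.FullSubcategory M)ᵒᵖ)
    (h₂ : M'.unop ⟶ N₂) : (proj N₂ g).app M' h₂ = h₂.hom ≫ g := rfl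

section
variable {N₁ N₂ : ObjectProperty.FullSubcategory M} {X : C} (f : N₁ ⟶ N₂) (g : N₂.obj ⟶ X)

/-- underlying morphism -/
def toC : N₁.obj ⟶ N₂.obj := f.hom


lemma assoc_zero {A B D E : C} (k : A ⟶ B) (u : B ⟶ D) (v : D ⟶ E) (h : u ≫ v = 0) :
    (k ≫ u) ≫ v = 0 := by rw [Category.assoc, h, Limits.comp_zero]

lemma proj_zero (hfg : toC f ≫ g = 0) :
    preadditiveYoneda.map f ≫ proj N₂ g = 0 := by
  ext M' k
  exact assoc_zero k.hom _ _ hfg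

variable (hsurj : ∀ (M' : ObjectProperty.FullSubcategory M) (k : M'.obj ⟶ X),
    ∃ k₂ : M'.obj ⟶ N₂.obj, k₂ ≫ g = k)
  (hker : ∀ (M' : ObjectProperty.FullSubcategory M) (k₂ : M'.obj ⟶ N₂.obj), k₂ ≫ g = 0 →
    ∃ k₁ : M'.obj ⟶ N₁.obj, k₂ = k₁ ≫ toC f)

section
variable {G : (ObjectProperty.FullSubcategory M)ᵒᵖ ⥤ AddCommGrpCat.{v}} (τ : preadditiveYoneda.obj N₂ ⟶ G)
  (hτ : preadditiveYoneda.map f ≫ τ = 0)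

include hker hτ in
lemma desc_key (M' : (ObjectProperty.FullSubcategory M)ᵒᵖ) (k₂ k₂' : M'.unop.obj ⟶ N₂.obj)
    (hk : k₂ ≫ g = k₂' ≫ g) : τ.app M' (ObjectProperty.homMk k₂) = τ.app M' (ObjectProperty.homMk k₂') := by
  have hd : (k₂ - k₂') ≫ g = 0 := by rw [Preadditive.sub_comp, hk, sub_self]
  obtain ⟨k₁, hk₁⟩ := hker M'.unop _ hd
  have h0 : τ.app M' (ObjectProperty.homMk (k₂ - k₂')) = 0 := by
    rw [hk₁]
    exact congrArg (fun (σ : preadditiveYoneda.obj N₁ ⟶ G) => σ.app M' (ObjectProperty.homMk k₁)) hτ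
  have h2 : τ.app M' (ObjectProperty.homMk (k₂ - k₂')) = τ.app M' (ObjectProperty.homMk k₂)
      - τ.app M' (ObjectProperty.homMk k₂') := (τ.app M').hom.map_sub _ _
  rw [h0] at h2
  exact sub_eq_zero.mp h2.symm

noncomputable def descNat : (res M).obj X ⟶ G where
  app M' := AddCommGrpCat.ofHom (AddMonoidHom.mk'
    (fun k : M'.unop.obj ⟶ X => τ.app M' (ObjectProperty.homMk (hsurj M'.unop k).choose)) (by
      intro a b
      show τ.app M' (ObjectProperty.homMk (hsurj M'.unop (a + b)).choose)
          = τ.app M' (ObjectProperty.homMk (hsurj M'.unop a).choose)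
            + τ.app M' (ObjectProperty.homMk (hsurj M'.unop b).choose)
      rw [desc_key f g hker τ hτ M' (hsurj M'.unop (a + b)).choose
        ((hsurj M'.unop a).choose + (hsurj M'.unop b).choose)
        (by rw [Preadditive.add_comp, (hsurj M'.unop a).choose_spec,
          (hsurj M'.unop b).choose_spec, (hsurj M'.unop (a + b)).choose_spec]; rfl)]
      exact (τ.app M').hom.map_add (ObjectProperty.homMk _) (ObjectProperty.homMk _)))
  naturality M' M'' α := by
    ext k
    show τ.app M'' (ObjectProperty.homMk (hsurj M''.unop (α.unop.hom ≫ k)).choose)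
        = G.map α (τ.app M' (ObjectProperty.homMk (hsurj M'.unop k).choose))
    rw [desc_key f g hker τ hτ M''
      (hsurj M''.unop (α.unop.hom ≫ k)).choose
      (α.unop.hom ≫ (hsurj M'.unop k).choose)
      (by rw [(hsurj M''.unop _).choose_spec, Category.assoc, (hsurj M'.unop k).choose_spec])]
    exact ConcreteCategory.congr_hom
      (τ.naturality α) (ObjectProperty.homMk (hsurj M'.unop k).choose)

end

noncomputable def projIsColimit (hfg : toC f ≫ g = 0) :
    IsColimit (CokernelCofork.ofπ (proj N₂ g) (proj_zero f g hfg)) := by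
  refine CokernelCofork.IsColimit.ofπ _ _
    (fun {G} τ hτ => descNat f g hsurj hker τ hτ) (fun {G} τ hτ => ?_) (fun {G} τ hτ m hm => ?_)
  · ext M' k₂
    show τ.app M' (ObjectProperty.homMk (hsurj M'.unop
      (k₂.hom ≫ g)).choose) = τ.app M' k₂
    exact desc_key f g hker τ hτ M' _ _ ((hsurj M'.unop _).choose_spec)
  · ext M' k
    have hk := (hsurj M'.unop k).choose_spec
    have h1 := congrArg (fun (σ : preadditiveYoneda.obj N₂ ⟶ G) =>
      σ.app M' (ObjectProperty.homMk (hsurj M'.unop k).choose)) hm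
    show m.app M' k = τ.app M' (ObjectProperty.homMk (hsurj M'.unop k).choose)
    conv_lhs => rw [← hk]
    exact h1

section PresIso

def ofC {A B : ObjectProperty.FullSubcategory M} (k : A.obj ⟶ B.obj) : A ⟶ B := ObjectProperty.homMk k

noncomputable def presIso {N₁ N₂ : ObjectProperty.FullSubcategory M} {X : C} (f : N₁ ⟶ N₂) (g : N₂.obj ⟶ X)
    (hfg : toC f ≫ g = 0)
    (hsurj : ∀ (M' : ObjectProperty.FullSubcategory M) (k : M'.obj ⟶ X),
      ∃ k₂ : M'.obj ⟶ N₂.obj, k₂ ≫ g = k)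
    (hker : ∀ (M' : ObjectProperty.FullSubcategory M) (k₂ : M'.obj ⟶ N₂.obj), k₂ ≫ g = 0 →
      ∃ k₁ : M'.obj ⟶ N₁.obj, k₂ = k₁ ≫ toC f) :
    (res M).obj X ≅ cokernel (preadditiveYoneda.map f) :=
  ((cokernelIsCokernel (preadditiveYoneda.map f)).coconePointUniqueUpToIso
    (projIsColimit f g hsurj hker hfg)).symm

/-- additivity of `res` on morphisms -/
noncomputable def resAdd (X Y : C) : (X ⟶ Y) →+ ((res M).obj X ⟶ (res M).obj Y) :=
  AddMonoidHom.mk' (fun u => (res M).map u) (by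
    intro a b
    ext M' k
    exact Preadditive.comp_add _ _ _ _ _ _)

lemma res_map_sub {X Y : C} (u v : X ⟶ Y) :
    (res M).map (u - v) = (res M).map u - (res M).map v :=
  (resAdd X Y).map_sub u v

end PresIso
end
end Aux
section Tri

variable {C : Type u} [Category.{v} C] [HasZeroObject C] [Preadditive C] [HasShift C ℤ]
  [∀ n : ℤ, (CategoryTheory.shiftFunctor C n).Additive] [Pretriangulated C]
variable {M : C → Prop}

section
variable (hrigid : ∀ X Y : C, M X → M Y →
    ∀ f : X ⟶ (CategoryTheory.shiftFunctor C (1 : ℤ)).obj Y, f = 0)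
  {N₁ N₂ : ObjectProperty.FullSubcategory M} {X : C} (f : N₁ ⟶ N₂) (g : N₂.obj ⟶ X)
  (h : X ⟶ (CategoryTheory.shiftFunctor C (1 : ℤ)).obj N₁.obj)
  (hT : Triangle.mk (toC f) g h ∈ distTriang C)

include hrigid hT in
lemma tri_surj (M' : ObjectProperty.FullSubcategory M) (k : M'.obj ⟶ X) :
    ∃ k₂ : M'.obj ⟶ N₂.obj, k₂ ≫ g = k := by
  obtain ⟨k₂, hk₂⟩ := Triangle.coyoneda_exact₃ _ hT k
    (hrigid M'.obj N₁.obj M'.property N₁.property (k ≫ h))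
  exact ⟨k₂, hk₂.symm⟩

include hT in
lemma tri_ker (M' : ObjectProperty.FullSubcategory M) (k₂ : M'.obj ⟶ N₂.obj) (hk : k₂ ≫ g = 0) :
    ∃ k₁ : M'.obj ⟶ N₁.obj, k₂ = k₁ ≫ toC f := by
  obtain ⟨k₁, hk₁⟩ := Triangle.coyoneda_exact₂ _ hT k₂ hk
  exact ⟨k₁, hk₁⟩

include hrigid hT in
/-- The presentation of the restricted Hom functor coming from a triangle. -/
noncomputable def triPresIso : (res M).obj X ≅ cokernel (preadditiveYoneda.map f) :=
  presIso f g (comp_distTriang_mor_zero₁₂ _ hT) (tri_surj hrigid f g h hT)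
    (tri_ker f g h hT)

include hrigid hT in
lemma tri_full (Y : C) (τ : (res M).obj X ⟶ (res M).obj Y) :
    ∃ u : X ⟶ Y, (res M).map u = τ := by
  set b : N₂.obj ⟶ Y := τ.app (op N₂) g with hbdef
  have hfb : toC f ≫ b = 0 := by
    have hnat := congrArg
      (fun (σ : ((res M).obj X).obj (op N₂) ⟶ ((res M).obj Y).obj (op N₁)) => σ g)
      (τ.naturality (Quiver.Hom.op (f : N₁ ⟶ N₂)))
    have h0 : (toC f ≫ g : N₁.obj ⟶ X) = 0 := comp_distTriang_mor_zero₁₂ _ hT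
    have h1 : τ.app (op N₁) (toC f ≫ g) = toC f ≫ b := hnat
    rw [h0] at h1
    rw [← h1]
    exact (τ.app (op N₁)).hom.map_zero
  obtain ⟨u, hu⟩ := Triangle.yoneda_exact₂ _ hT b hfb
  refine ⟨u, ?_⟩
  ext M' k
  obtain ⟨k₂, hk₂⟩ := tri_surj hrigid f g h hT M'.unop k
  have hnat := congrArg
    (fun (σ : ((res M).obj X).obj (op N₂) ⟶ ((res M).obj Y).obj M') => σ g)
    (τ.naturality (Quiver.Hom.op (ofC (A := M'.unop) k₂)))
  have hb' : (k₂ ≫ g) ≫ u = k₂ ≫ b := by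
    rw [hu]
    dsimp only [Triangle.mk]
    exact Category.assoc k₂ g u
  have goal : (k₂ ≫ g) ≫ u = τ.app M' (k₂ ≫ g) := hb'.trans hnat.symm
  rw [← hk₂]
  exact goal

include hT in
lemma tri_ideal (Y : C) (w : X ⟶ Y) (hw : (res M).map w = 0) :
    ∃ t : (CategoryTheory.shiftFunctor C (1 : ℤ)).obj N₁.obj ⟶ Y, w = h ≫ t := by
  have hg : g ≫ w = 0 := by
    have := congrArg (fun (σ : (res M).obj X ⟶ (res M).obj Y) => σ.app (op N₂) g) hw
    exact this
  obtain ⟨t, ht⟩ := Triangle.yoneda_exact₃ _ hT w hg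
  exact ⟨t, ht⟩

end

end Tri



section Main

variable {C : Type u} [Category.{v} C] [HasZeroObject C] [Preadditive C] [HasShift C ℤ]
  [∀ n : ℤ, (CategoryTheory.shiftFunctor C n).Additive] [Pretriangulated C]
  {M : C → Prop}

variable (M) in
/-- The subcategory `ΣM`. -/
def shiftP : C → Prop := fun Z => ∃ M₀ : C, M M₀ ∧
  Nonempty (Z ≅ (CategoryTheory.shiftFunctor C (1 : ℤ)).obj M₀)

variable
  (hrigid : ∀ X Y : C, M X → M Y →
    ∀ f : X ⟶ (CategoryTheory.shiftFunctor C (1 : ℤ)).obj Y, f = 0)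
  (hct : ∀ X : C, ∃ (M₁ M₂ : C) (f : M₁ ⟶ M₂) (g : M₂ ⟶ X)
    (h : X ⟶ (CategoryTheory.shiftFunctor C (1 : ℤ)).obj M₁),
    M M₁ ∧ M M₂ ∧ Triangle.mk f g h ∈ distTriang C)

include hrigid hct in
lemma res_isFP (X : C) : IsFP (ObjectProperty.FullSubcategory M) ((res M).obj X) := by
  obtain ⟨M₁, M₂, f, g, h, hM₁, hM₂, hT⟩ := hct X
  exact ⟨⟨M₁, hM₁⟩, ⟨M₂, hM₂⟩, ofC f,
    ⟨triPresIso hrigid (ofC (A := ⟨M₁, hM₁⟩) (B := ⟨M₂, hM₂⟩) f) g h hT⟩⟩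

/-- The functor `C ⥤ mod-M`. -/
noncomputable def Fone : C ⥤ ModCat (ObjectProperty.FullSubcategory M) :=
  ObjectProperty.lift _ (res M) (res_isFP hrigid hct)

include hrigid in
lemma res_ideal_zero {X Y : C} (w : X ⟶ Y) (hw : w ∈ idealOf C (shiftP M) X Y) :
    (res M).map w = 0 := by
  suffices hle : idealOf C (shiftP M) X Y ≤ (resAdd (M := M) X Y).ker by
    exact AddMonoidHom.mem_ker.mp (hle hw)
  rw [idealOf, AddSubgroup.closure_le]
  rintro w' ⟨Z, ⟨M₀, hM₀, ⟨e⟩⟩, a, b, rfl⟩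
  rw [SetLike.mem_coe, AddMonoidHom.mem_ker]
  show (res M).map (a ≫ b) = 0
  ext M' k
  have h1 : (k ≫ a) ≫ e.hom = 0 :=
    hrigid M'.unop.obj M₀ M'.unop.property hM₀ ((k ≫ a) ≫ e.hom)
  have h2 : (k ≫ a : M'.unop.obj ⟶ Z) = 0 := by
    have h3 : ((k ≫ a) ≫ e.hom) ≫ e.inv = k ≫ a := by
      rw [Category.assoc, e.hom_inv_id, Category.comp_id]
    rw [h1, Limits.zero_comp] at h3
    exact h3.symm
  have h4 : (k ≫ a) ≫ b = (0 : M'.unop.obj ⟶ Y) := by rw [h2, Limits.zero_comp]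
  exact (Category.assoc k a b).symm.trans h4

include hrigid hct in
lemma Fone_compat : ∀ (X Y : C) (u v : X ⟶ Y), idealRel C (shiftP M) u v →
    (Fone hrigid hct).map u = (Fone hrigid hct).map v := by
  intro X Y u v hr
  have h0 : (res M).map (u - v) = 0 := res_ideal_zero hrigid (u - v) hr
  rw [res_map_sub] at h0
  exact ObjectProperty.hom_ext _ (sub_eq_zero.mp h0)

/-- The induced functor `C/[ΣM] ⥤ mod-M`. -/
noncomputable def Ftwo : IdealQuot C (shiftP M) ⥤ ModCat (ObjectProperty.FullSubcategory M) :=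
  CategoryTheory.Quotient.lift (idealRel C (shiftP M)) (Fone hrigid hct) (Fone_compat hrigid hct)

include hrigid hct in
lemma Ftwo_full : (Ftwo hrigid hct).Full := by
  constructor
  intro Xq Yq τ
  obtain ⟨M₁, M₂, f, g, h, hM₁, hM₂, hT⟩ := hct Xq.as
  obtain ⟨u, hu⟩ := tri_full hrigid (ofC (A := ⟨M₁, hM₁⟩) (B := ⟨M₂, hM₂⟩) f) g h hT Yq.as τ.hom
  refine ⟨(Quotient.functor _).map u, ?_⟩
  have e1 := Quotient.lift_map_functor_map (idealRel C (shiftP M)) (Fone hrigid hct)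
    (Fone_compat hrigid hct) u
  exact e1.trans (ObjectProperty.hom_ext _ hu)

include hrigid hct in
lemma Ftwo_faithful : (Ftwo hrigid hct).Faithful := by
  constructor
  intro Xq Yq φ ψ hfψ
  obtain ⟨u, rfl⟩ := (Quotient.functor (idealRel C (shiftP M))).map_surjective φ
  obtain ⟨v, rfl⟩ := (Quotient.functor (idealRel C (shiftP M))).map_surjective ψ
  have e1 := Quotient.lift_map_functor_map (idealRel C (shiftP M)) (Fone hrigid hct)
    (Fone_compat hrigid hct) u
  have e2 := Quotient.lift_map_functor_map (idealRel C (shiftP M)) (Fone hrigid hct)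
    (Fone_compat hrigid hct) v
  have h1 : (res M).map u = (res M).map v := by
    have h := congrArg (fun φ => InducedCategory.Hom.hom φ) (e1.symm.trans (hfψ.trans e2))
    exact h
  have h0 : (res M).map (u - v) = 0 := by
    rw [res_map_sub]
    exact sub_eq_zero.mpr h1
  obtain ⟨M₁, M₂, f, g, h, hM₁, hM₂, hT⟩ := hct Xq.as
  obtain ⟨t, ht⟩ := tri_ideal (M := M) (N₁ := ⟨M₁, hM₁⟩) (N₂ := ⟨M₂, hM₂⟩)
    (ofC f) g h hT Yq.as (u - v) h0
  apply (Quotient.functor_map_eq_iff (idealRel C (shiftP M)) u v).mpr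
  exact AddSubgroup.subset_closure
    ⟨(CategoryTheory.shiftFunctor C (1 : ℤ)).obj M₁, ⟨M₁, hM₁, ⟨Iso.refl _⟩⟩, h, t, ht⟩

include hrigid hct in
lemma Ftwo_essSurj : (Ftwo hrigid hct).EssSurj := by
  constructor
  intro Gp
  obtain ⟨N₁, N₂, f, ⟨e⟩⟩ := Gp.property
  obtain ⟨Z, g, h, hT⟩ := Pretriangulated.distinguished_cocone_triangle (toC f)
  have iso1 : (res M).obj Z ≅ cokernel (preadditiveYoneda.map f) :=
    triPresIso hrigid f g h hT
  have u : (res M).obj Z ≅ Gp.obj := iso1.trans e.symm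
  exact ⟨(Quotient.functor _).obj Z,
    ⟨ObjectProperty.isoMk _ u⟩⟩

end Main


/-- Let `C` be a triangulated category with suspension `Σ` and `M` a
cluster-tilting subcategory. Then `C/[ΣM] ≃ mod-M`. -/
theorem statement9 (C : Type u) [Category.{v} C] [Preadditive C] [HasZeroObject C]
    [HasShift C ℤ] [∀ n : ℤ, (CategoryTheory.shiftFunctor C n).Additive]
    [Pretriangulated C] [IsTriangulated C]
    (M : C → Prop)
    (hrigid : ∀ X Y : C, M X → M Y →
      ∀ f : X ⟶ (CategoryTheory.shiftFunctor C (1 : ℤ)).obj Y, f = 0)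
    (hct : ∀ X : C, ∃ (M₁ M₂ : C) (f : M₁ ⟶ M₂) (g : M₂ ⟶ X)
      (h : X ⟶ (CategoryTheory.shiftFunctor C (1 : ℤ)).obj M₁),
      M M₁ ∧ M M₂ ∧ Triangle.mk f g h ∈ distTriang C) :
    Nonempty (IdealQuot C
        (fun Z => ∃ M₀ : C, M M₀ ∧
          Nonempty (Z ≅ (CategoryTheory.shiftFunctor C (1 : ℤ)).obj M₀))
      ≌ ModCat (ObjectProperty.FullSubcategory M)) := by
  haveI := Ftwo_full hrigid hct
  haveI := Ftwo_faithful hrigid hct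
  haveI := Ftwo_essSurj hrigid hct
  haveI : (Ftwo hrigid hct).IsEquivalence := {}
  exact ⟨(Ftwo hrigid hct).asEquivalence⟩

end Paper
end

section
/- Let C be a triangulated category and Δ(C) its category of triangles. Let R2 be the ideal of Δ(C) consisting of those morphisms φ• = (φ1, φ2, φ3) : X• --> Y• for which there exists p : X3 --> Y2 with g2 p = φ3. Then the quotient category Δ(C)/R2 is an abelian category, whose kernels and cokernels are computed via homotopy cartesian squares: the kernel of φ• is the triangle X1 --> X2 ⊕ Y1 --> Z --> ΣX1 obtained by completing (f1, φ1) to a homotopy cartesian square, and the cokernel is the triangle Z --> X3 ⊕ Y2 --> Y3 --> ΣZ obtained dually. -/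
open CategoryTheory CategoryTheory.Limits Opposite ZeroObject CategoryTheory.Pretriangulated

universe w v u

namespace Paper

section TrianglePreadditive

variable {C : Type u} [Category.{v} C] [HasShift C ℤ] [Preadditive C]
  [(shiftFunctor C (1 : ℤ)).Additive]

namespace TriHom

variable {T₁ T₂ : Triangle C}

instance : Zero (T₁ ⟶ T₂) :=
  ⟨{ hom₁ := 0, hom₂ := 0, hom₃ := 0, comm₁ := by simp, comm₂ := by simp, comm₃ := by simp }⟩
instance : Add (T₁ ⟶ T₂) :=
  ⟨fun u v =>
    { hom₁ := u.hom₁ + v.hom₁, hom₂ := u.hom₂ + v.hom₂, hom₃ := u.hom₃ + v.hom₃,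
      comm₁ := by simp [Preadditive.add_comp, Preadditive.comp_add],
      comm₂ := by simp [Preadditive.add_comp, Preadditive.comp_add],
      comm₃ := by simp [Preadditive.add_comp, Preadditive.comp_add, Functor.map_add] }⟩
instance : Neg (T₁ ⟶ T₂) :=
  ⟨fun u =>
    { hom₁ := -u.hom₁, hom₂ := -u.hom₂, hom₃ := -u.hom₃,
      comm₁ := by simp, comm₂ := by simp, comm₃ := by simp [Functor.map_neg] }⟩
instance : Sub (T₁ ⟶ T₂) :=
  ⟨fun u v =>
    { hom₁ := u.hom₁ - v.hom₁, hom₂ := u.hom₂ - v.hom₂, hom₃ := u.hom₃ - v.hom₃,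
      comm₁ := by simp [Preadditive.sub_comp, Preadditive.comp_sub],
      comm₂ := by simp [Preadditive.sub_comp, Preadditive.comp_sub],
      comm₃ := by simp [Preadditive.sub_comp, Preadditive.comp_sub, Functor.map_sub] }⟩
instance : SMul ℕ (T₁ ⟶ T₂) :=
  ⟨fun n u =>
    { hom₁ := n • u.hom₁, hom₂ := n • u.hom₂, hom₃ := n • u.hom₃,
      comm₁ := by simp, comm₂ := by simp,
      comm₃ := by simp [Functor.map_nsmul] }⟩
instance : SMul ℤ (T₁ ⟶ T₂) :=
  ⟨fun n u =>
    { hom₁ := n • u.hom₁, hom₂ := n • u.hom₂, hom₃ := n • u.hom₃,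
      comm₁ := by simp, comm₂ := by simp,
      comm₃ := by simp [Functor.map_zsmul] }⟩

@[simp] lemma zero_hom₁ : (0 : T₁ ⟶ T₂).hom₁ = 0 := rfl
@[simp] lemma add_hom₁ (u v : T₁ ⟶ T₂) : (u + v).hom₁ = u.hom₁ + v.hom₁ := rfl
@[simp] lemma sub_hom₁ (u v : T₁ ⟶ T₂) : (u - v).hom₁ = u.hom₁ - v.hom₁ := rfl
@[simp] lemma zero_hom₃ : (0 : T₁ ⟶ T₂).hom₃ = 0 := rfl
@[simp] lemma add_hom₃ (u v : T₁ ⟶ T₂) : (u + v).hom₃ = u.hom₃ + v.hom₃ := rfl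
@[simp] lemma sub_hom₃ (u v : T₁ ⟶ T₂) : (u - v).hom₃ = u.hom₃ - v.hom₃ := rfl
@[simp] lemma zero_hom₂ : (0 : T₁ ⟶ T₂).hom₂ = 0 := rfl
@[simp] lemma add_hom₂ (u v : T₁ ⟶ T₂) : (u + v).hom₂ = u.hom₂ + v.hom₂ := rfl
@[simp] lemma sub_hom₂ (u v : T₁ ⟶ T₂) : (u - v).hom₂ = u.hom₂ - v.hom₂ := rfl

def toTriple (u : T₁ ⟶ T₂) :
    (T₁.obj₁ ⟶ T₂.obj₁) × (T₁.obj₂ ⟶ T₂.obj₂) × (T₁.obj₃ ⟶ T₂.obj₃) :=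
  (u.hom₁, u.hom₂, u.hom₃)

lemma toTriple_injective : Function.Injective (toTriple (T₁ := T₁) (T₂ := T₂)) := by
  rintro ⟨⟩ ⟨⟩ h
  simp only [toTriple, Prod.mk.injEq] at h
  exact TriangleMorphism.ext h.1 h.2.1 h.2.2

instance : AddCommGroup (T₁ ⟶ T₂) :=
  toTriple_injective.addCommGroup toTriple rfl (fun _ _ => rfl) (fun _ => rfl) (fun _ _ => rfl)
    (fun _ _ => rfl) (fun _ _ => rfl)

end TriHom

instance : Preadditive (Triangle C) where
  homGroup T₁ T₂ := inferInstance
  add_comp := by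
    intros; apply TriangleMorphism.ext <;> simp [Preadditive.add_comp]
  comp_add := by
    intros; apply TriangleMorphism.ext <;> simp [Preadditive.comp_add]

end TrianglePreadditive


section S19

variable (C : Type u) [Category.{v} C] [Preadditive C] [HasZeroObject C] [HasShift C ℤ]
  [∀ n : ℤ, (CategoryTheory.shiftFunctor C n).Additive] [Pretriangulated C]

/-- the category `Δ(C)` of (distinguished) triangles in `C` -/
abbrev DistTriCat := ObjectProperty.FullSubcategory (fun T : Triangle C => T ∈ distTriang C)

/-- the ideal `R₂` of `Δ(C)`: `φ ∼ ψ` iff there is `p : X₃ ⟶ Y₂` with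
`p ≫ g₂ = φ₃ - ψ₃`. -/
def R2Rel : HomRel (DistTriCat C) := fun {A B} φ ψ =>
  ∃ p : A.obj.obj₃ ⟶ B.obj.obj₂,
    p ≫ B.obj.mor₂ = TriangleMorphism.hom₃ φ.hom - TriangleMorphism.hom₃ ψ.hom

instance : Congruence (R2Rel C) where
  equivalence :=
    { refl := fun φ => ⟨0, by simp⟩
      symm := by
        rintro φ ψ ⟨p, hp⟩
        exact ⟨-p, by rw [Preadditive.neg_comp, hp]; abel⟩
      trans := by
        rintro φ ψ χ ⟨p, hp⟩ ⟨q, hq⟩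
        exact ⟨p + q, by rw [Preadditive.add_comp, hp, hq]; abel⟩ }
  comp_left := by
    rintro A B D χ φ ψ ⟨p, hp⟩
    refine ⟨TriangleMorphism.hom₃ χ.hom ≫ p, ?_⟩
    have h₁ : TriangleMorphism.hom₃ (χ ≫ φ).hom =
        TriangleMorphism.hom₃ χ.hom ≫ TriangleMorphism.hom₃ φ.hom := rfl
    have h₂ : TriangleMorphism.hom₃ (χ ≫ ψ).hom =
        TriangleMorphism.hom₃ χ.hom ≫ TriangleMorphism.hom₃ ψ.hom := rfl
    rw [h₁, h₂, Category.assoc, hp, Preadditive.comp_sub]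
  comp_right := by
    rintro A B D φ ψ χ ⟨p, hp⟩
    refine ⟨p ≫ TriangleMorphism.hom₂ χ.hom, ?_⟩
    have h₁ : TriangleMorphism.hom₃ (φ ≫ χ).hom =
        TriangleMorphism.hom₃ φ.hom ≫ TriangleMorphism.hom₃ χ.hom := rfl
    have h₂ : TriangleMorphism.hom₃ (ψ ≫ χ).hom =
        TriangleMorphism.hom₃ ψ.hom ≫ TriangleMorphism.hom₃ χ.hom := rfl
    have hcomm : TriangleMorphism.hom₂ χ.hom ≫ D.obj.mor₂ =
        B.obj.mor₂ ≫ TriangleMorphism.hom₃ χ.hom := (TriangleMorphism.comm₂ χ.hom).symm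
    rw [h₁, h₂, Category.assoc, hcomm, ← Category.assoc, hp, Preadditive.sub_comp]

lemma R2Rel_add : ∀ ⦃A B : DistTriCat C⦄ (φ₁ φ₂ ψ₁ ψ₂ : A ⟶ B)
    (_ : R2Rel C φ₁ φ₂) (_ : R2Rel C ψ₁ ψ₂), R2Rel C (φ₁ + ψ₁) (φ₂ + ψ₂) := by
  rintro A B φ₁ φ₂ ψ₁ ψ₂ ⟨p, hp⟩ ⟨q, hq⟩
  refine ⟨p + q, ?_⟩
  have h₁ : TriangleMorphism.hom₃ (φ₁ + ψ₁).hom =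
      TriangleMorphism.hom₃ φ₁.hom + TriangleMorphism.hom₃ ψ₁.hom := rfl
  have h₂ : TriangleMorphism.hom₃ (φ₂ + ψ₂).hom =
      TriangleMorphism.hom₃ φ₂.hom + TriangleMorphism.hom₃ ψ₂.hom := rfl
  rw [Preadditive.add_comp, hp, hq, h₁, h₂]
  abel

instance : Preadditive (CategoryTheory.Quotient (R2Rel C)) :=
  Quotient.preadditive _ (R2Rel_add C)

end S19

section Proof

variable {C : Type u} [Category.{v} C] [Preadditive C] [HasZeroObject C] [HasShift C ℤ]
  [∀ n : ℤ, (CategoryTheory.shiftFunctor C n).Additive] [Pretriangulated C]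

namespace P19

instance : (Quotient.functor (R2Rel C)).Additive :=
  Quotient.functor_additive _ (R2Rel_add C)

@[simp] lemma dcomp_hom₁ {A B D : DistTriCat C} (f : A ⟶ B) (g : B ⟶ D) :
    TriangleMorphism.hom₁ (f ≫ g).hom = f.hom.hom₁ ≫ g.hom.hom₁ := rfl
@[simp] lemma dcomp_hom₂ {A B D : DistTriCat C} (f : A ⟶ B) (g : B ⟶ D) :
    TriangleMorphism.hom₂ (f ≫ g).hom = f.hom.hom₂ ≫ g.hom.hom₂ := rfl
@[simp] lemma dcomp_hom₃ {A B D : DistTriCat C} (f : A ⟶ B) (g : B ⟶ D) :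
    TriangleMorphism.hom₃ (f ≫ g).hom = f.hom.hom₃ ≫ g.hom.hom₃ := rfl
@[simp] lemma dzero_hom₃ {A B : DistTriCat C} :
    TriangleMorphism.hom₃ (0 : A ⟶ B).hom = 0 := rfl
@[simp] lemma did_hom₃ {A : DistTriCat C} :
    TriangleMorphism.hom₃ (InducedCategory.Hom.hom (𝟙 A)) = 𝟙 A.obj.obj₃ := rfl

lemma map_eq_iff {A B : DistTriCat C} (φ ψ : A ⟶ B) :
    (Quotient.functor (R2Rel C)).map φ = (Quotient.functor (R2Rel C)).map ψ ↔
      ∃ p : A.obj.obj₃ ⟶ B.obj.obj₂, p ≫ B.obj.mor₂ = φ.hom.hom₃ - ψ.hom.hom₃ :=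
  Quotient.functor_map_eq_iff (R2Rel C) φ ψ

lemma map_eq_zero_iff {A B : DistTriCat C} (φ : A ⟶ B) :
    (Quotient.functor (R2Rel C)).map φ = 0 ↔
      ∃ p : A.obj.obj₃ ⟶ B.obj.obj₂, p ≫ B.obj.mor₂ = φ.hom.hom₃ := by
  have h : (0 : (Quotient.functor (R2Rel C)).obj A ⟶ (Quotient.functor (R2Rel C)).obj B)
      = (Quotient.functor (R2Rel C)).map 0 := (Functor.map_zero _ _ _).symm
  rw [h, map_eq_iff]
  simp only [dzero_hom₃, sub_zero]

lemma extend_mor (A B : DistTriCat C) (b : A.obj.obj₂ ⟶ B.obj.obj₂)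
    (χ : A.obj.obj₃ ⟶ B.obj.obj₃) (h : A.obj.mor₂ ≫ χ = b ≫ B.obj.mor₂) :
    ∃ θ : A ⟶ B, θ.hom.hom₂ = b ∧ θ.hom.hom₃ = χ := by
  obtain ⟨a, ha₁, ha₂⟩ := Pretriangulated.complete_distinguished_triangle_morphism₁ A.obj B.obj
    A.property B.property b χ h
  exact ⟨ObjectProperty.homMk { hom₁ := a, hom₂ := b, hom₃ := χ, comm₁ := ha₁, comm₂ := h, comm₃ := ha₂ }, rfl, rfl⟩

section Ker

variable {A B : DistTriCat C} (φ : A ⟶ B)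
variable {Z : C} {w : A.obj.obj₂ ⊞ B.obj.obj₁ ⟶ Z}
  {δ : Z ⟶ (shiftFunctor C (1 : ℤ)).obj A.obj.obj₁}
  (hdist : Triangle.mk' _ _ _ (biprod.lift A.obj.mor₁ φ.hom.hom₁) w δ ∈ distTriang C)

include hdist

lemma d_lemma (k₃ : Z ⟶ A.obj.obj₃) (hk3 : k₃ ≫ A.obj.mor₃ = δ)
    {U : C} (d : U ⟶ A.obj.obj₃) (e : U ⟶ B.obj.obj₂)
    (hd : d ≫ φ.hom.hom₃ = e ≫ B.obj.mor₂) :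
    ∃ (ε : U ⟶ Z) (η : U ⟶ A.obj.obj₂), d = ε ≫ k₃ + η ≫ A.obj.mor₂ := by
  have h1 : (d ≫ A.obj.mor₃) ≫ (shiftFunctor C (1 : ℤ)).map A.obj.mor₁ = 0 := by
    rw [Category.assoc, comp_distTriang_mor_zero₃₁ _ A.property, comp_zero]
  have h2 : (d ≫ A.obj.mor₃) ≫ (shiftFunctor C (1 : ℤ)).map φ.hom.hom₁ = 0 := by
    rw [Category.assoc, φ.hom.comm₃, ← Category.assoc, hd, Category.assoc,
      comp_distTriang_mor_zero₂₃ _ B.property, comp_zero]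
  have hα : (d ≫ A.obj.mor₃) ≫
      (shiftFunctor C (1 : ℤ)).map (biprod.lift A.obj.mor₁ φ.hom.hom₁) = 0 := by
    simp only [biprod.lift_eq, Functor.map_add, Functor.map_comp, Preadditive.comp_add,
      ← Category.assoc]
    rw [h1, h2, zero_comp, zero_comp, add_zero]
  obtain ⟨ε, hε⟩ : ∃ ε : U ⟶ Z, d ≫ A.obj.mor₃ = ε ≫ δ :=
    Pretriangulated.Triangle.coyoneda_exact₁ _ hdist (d ≫ A.obj.mor₃) hα
  have h3 : (d - ε ≫ k₃) ≫ A.obj.mor₃ = 0 := by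
    rw [Preadditive.sub_comp, Category.assoc, hk3, hε]
    exact sub_eq_zero_of_eq rfl
  obtain ⟨η, hη⟩ := Pretriangulated.Triangle.coyoneda_exact₃ _ A.property _ h3
  exact ⟨ε, η, by rw [← hη]; abel⟩

lemma kfac (k₃ : Z ⟶ A.obj.obj₃) (hk3 : k₃ ≫ A.obj.mor₃ = δ)
    {U : C} (x : U ⟶ Z) (q : U ⟶ A.obj.obj₂) (h : x ≫ k₃ = q ≫ A.obj.mor₂) :
    ∃ s : U ⟶ A.obj.obj₂ ⊞ B.obj.obj₁, x = s ≫ w := by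
  have h0 : x ≫ δ = 0 := by
    rw [← hk3, ← Category.assoc, h, Category.assoc,
      comp_distTriang_mor_zero₂₃ _ A.property, comp_zero]
  exact Pretriangulated.Triangle.coyoneda_exact₃ _ hdist x h0

lemma ker_zero
    (k : (⟨Triangle.mk' _ _ _ (biprod.lift A.obj.mor₁ φ.hom.hom₁) w δ, hdist⟩ : DistTriCat C) ⟶ A)
    (hk1 : k.hom.hom₁ = 𝟙 A.obj.obj₁) :
    (Quotient.functor (R2Rel C)).map k ≫ (Quotient.functor (R2Rel C)).map φ = 0 := by
  have hk3 : k.hom.hom₃ ≫ A.obj.mor₃ = δ := by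
    have h := k.hom.comm₃
    rw [hk1] at h
    simpa using h.symm
  have hδφ : δ ≫ (shiftFunctor C (1 : ℤ)).map φ.hom.hom₁ = 0 := by
    have h0 : δ ≫ (shiftFunctor C (1 : ℤ)).map (biprod.lift A.obj.mor₁ φ.hom.hom₁) = 0 :=
      comp_distTriang_mor_zero₃₁ _ hdist
    have h1 : biprod.lift A.obj.mor₁ φ.hom.hom₁ ≫ biprod.snd = φ.hom.hom₁ := by simp
    rw [← h1, Functor.map_comp, ← Category.assoc, h0, zero_comp]
  have hkφ3 : (k.hom.hom₃ ≫ φ.hom.hom₃) ≫ B.obj.mor₃ = 0 := by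
    erw [Category.assoc, ← φ.hom.comm₃, ← Category.assoc, hk3, hδφ]
  obtain ⟨p, hp⟩ := Pretriangulated.Triangle.coyoneda_exact₃ _ B.property _ hkφ3
  rw [← Functor.map_comp, map_eq_zero_iff]
  exact ⟨p, by rw [dcomp_hom₃]; exact hp.symm⟩

noncomputable def ker_isLimit
    (k : (⟨Triangle.mk' _ _ _ (biprod.lift A.obj.mor₁ φ.hom.hom₁) w δ, hdist⟩ : DistTriCat C) ⟶ A)
    (hk1 : k.hom.hom₁ = 𝟙 A.obj.obj₁)
    (hzero : (Quotient.functor (R2Rel C)).map k ≫ (Quotient.functor (R2Rel C)).map φ = 0) :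
    IsLimit (KernelFork.ofι ((Quotient.functor (R2Rel C)).map k) hzero) := by
  have hk3 : k.hom.hom₃ ≫ A.obj.mor₃ = δ := by
    have h := k.hom.comm₃
    rw [hk1] at h
    simpa using h.symm
  have kmono : ∀ {W : CategoryTheory.Quotient (R2Rel C)}
      (m m' : W ⟶ (Quotient.functor (R2Rel C)).obj (⟨_, hdist⟩ : DistTriCat C)),
      m ≫ (Quotient.functor (R2Rel C)).map k = m' ≫ (Quotient.functor (R2Rel C)).map k →
        m = m' := by
    intro W m m' hmm'
    obtain ⟨e, rfl⟩ := (Quotient.functor (R2Rel C)).map_surjective m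
    obtain ⟨e', rfl⟩ := (Quotient.functor (R2Rel C)).map_surjective m'
    rw [← Functor.map_comp, ← Functor.map_comp, map_eq_iff] at hmm'
    obtain ⟨p, hp⟩ := hmm'
    simp only [dcomp_hom₃] at hp
    obtain ⟨s, hs⟩ := kfac φ hdist k.hom.hom₃ hk3 (e.hom.hom₃ - e'.hom.hom₃) p
      (by erw [Preadditive.sub_comp, hp])
    rw [map_eq_iff]
    exact ⟨s, hs.symm⟩
  have key : ∀ {W : CategoryTheory.Quotient (R2Rel C)}
      (g' : W ⟶ (Quotient.functor (R2Rel C)).obj A),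
      g' ≫ (Quotient.functor (R2Rel C)).map φ = 0 →
      ∃ l', l' ≫ (Quotient.functor (R2Rel C)).map k = g' := by
    intro W g' hg'
    obtain ⟨ψ, rfl⟩ := (Quotient.functor (R2Rel C)).map_surjective g'
    rw [← Functor.map_comp, map_eq_zero_iff] at hg'
    obtain ⟨p', hp'⟩ := hg'
    simp only [dcomp_hom₃] at hp'
    obtain ⟨ε, η, hεη⟩ := d_lemma φ hdist k.hom.hom₃ hk3 ψ.hom.hom₃ p' hp'.symm
    have hek : ε ≫ k.hom.hom₃ = ψ.hom.hom₃ - η ≫ A.obj.mor₂ := by rw [hεη]; abel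
    have h1 : (W.as.obj.mor₂ ≫ ε) ≫ k.hom.hom₃ =
        (ψ.hom.hom₂ - W.as.obj.mor₂ ≫ η) ≫ A.obj.mor₂ := by
      erw [Category.assoc, hek, Preadditive.comp_sub, ψ.hom.comm₂, Preadditive.sub_comp]
      simp [Category.assoc]
    obtain ⟨s, hs⟩ := kfac φ hdist k.hom.hom₃ hk3 (W.as.obj.mor₂ ≫ ε) _ h1
    obtain ⟨l, hl₂, hl₃⟩ := extend_mor W.as (⟨_, hdist⟩ : DistTriCat C) s ε hs
    refine ⟨(Quotient.functor (R2Rel C)).map l, ?_⟩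
    rw [← Functor.map_comp, map_eq_iff]
    refine ⟨-η, ?_⟩
    simp only [dcomp_hom₃, hl₃]
    rw [hεη, Preadditive.neg_comp]
    abel
  exact KernelFork.IsLimit.ofι _ _
    (fun {W'} g' hg' => (key g' hg').choose)
    (fun {W'} g' hg' => (key g' hg').choose_spec)
    (fun {W'} g' hg' m hm => kmono _ _ (by rw [hm, (key g' hg').choose_spec]))

lemma ker_main :
    ∃ k : (⟨Triangle.mk' _ _ _ (biprod.lift A.obj.mor₁ φ.hom.hom₁) w δ, hdist⟩ : DistTriCat C) ⟶ A,
      k.hom.hom₁ = 𝟙 A.obj.obj₁ ∧ k.hom.hom₂ = biprod.fst ∧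
      ∃ hzero : (Quotient.functor (R2Rel C)).map k ≫ (Quotient.functor (R2Rel C)).map φ = 0,
        Nonempty (IsLimit (KernelFork.ofι ((Quotient.functor (R2Rel C)).map k) hzero)) := by
  obtain ⟨k₃, hc₂, hc₃⟩ := Pretriangulated.complete_distinguished_triangle_morphism
    _ A.obj hdist A.property (𝟙 A.obj.obj₁) biprod.fst (by simp)
  let k : (⟨Triangle.mk' _ _ _ (biprod.lift A.obj.mor₁ φ.hom.hom₁) w δ, hdist⟩ : DistTriCat C) ⟶ A :=
    ObjectProperty.homMk
    { hom₁ := 𝟙 _, hom₂ := biprod.fst, hom₃ := k₃, comm₁ := by simp, comm₂ := hc₂,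
      comm₃ := hc₃ }
  exact ⟨k, rfl, rfl, ker_zero φ hdist k rfl, ⟨ker_isLimit φ hdist k rfl _⟩⟩

end Ker

section Cok

variable {A B : DistTriCat C} (φ : A ⟶ B)
variable {Z' : C} {u : Z' ⟶ A.obj.obj₃ ⊞ B.obj.obj₂}
  {δ' : B.obj.obj₃ ⟶ (shiftFunctor C (1 : ℤ)).obj Z'}
  (hdist' : Triangle.mk' _ _ _ u (biprod.desc (-(φ.hom.hom₃)) B.obj.mor₂) δ' ∈ distTriang C)

include hdist'

lemma cok_zero
    (c : B ⟶ (⟨Triangle.mk' _ _ _ u (biprod.desc (-(φ.hom.hom₃)) B.obj.mor₂) δ', hdist'⟩ : DistTriCat C))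
    (hc3 : c.hom.hom₃ = 𝟙 B.obj.obj₃) :
    (Quotient.functor (R2Rel C)).map φ ≫ (Quotient.functor (R2Rel C)).map c = 0 := by
  rw [← Functor.map_comp, map_eq_zero_iff]
  refine ⟨biprod.lift (-(𝟙 A.obj.obj₃)) 0, ?_⟩
  simp [dcomp_hom₃, hc3]

noncomputable def cok_isColimit
    (c : B ⟶ (⟨Triangle.mk' _ _ _ u (biprod.desc (-(φ.hom.hom₃)) B.obj.mor₂) δ', hdist'⟩ : DistTriCat C))
    (hc3 : c.hom.hom₃ = 𝟙 B.obj.obj₃)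
    (hzero : (Quotient.functor (R2Rel C)).map φ ≫ (Quotient.functor (R2Rel C)).map c = 0) :
    IsColimit (CokernelCofork.ofπ ((Quotient.functor (R2Rel C)).map c) hzero) := by
  have cepi : ∀ {W : CategoryTheory.Quotient (R2Rel C)}
      (m m' : (Quotient.functor (R2Rel C)).obj (⟨_, hdist'⟩ : DistTriCat C) ⟶ W),
      (Quotient.functor (R2Rel C)).map c ≫ m = (Quotient.functor (R2Rel C)).map c ≫ m' →
        m = m' := by
    intro W m m' h
    obtain ⟨e, rfl⟩ := (Quotient.functor (R2Rel C)).map_surjective m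
    obtain ⟨e', rfl⟩ := (Quotient.functor (R2Rel C)).map_surjective m'
    rw [← Functor.map_comp, ← Functor.map_comp, map_eq_iff] at h
    obtain ⟨p, hp⟩ := h
    simp only [dcomp_hom₃, hc3, Category.id_comp] at hp
    rw [map_eq_iff]
    exact ⟨p, hp⟩
  have key : ∀ {W : CategoryTheory.Quotient (R2Rel C)}
      (g' : (Quotient.functor (R2Rel C)).obj B ⟶ W),
      (Quotient.functor (R2Rel C)).map φ ≫ g' = 0 →
      ∃ l', (Quotient.functor (R2Rel C)).map c ≫ l' = g' := by
    intro W g' hg'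
    obtain ⟨ψ, rfl⟩ := (Quotient.functor (R2Rel C)).map_surjective g'
    rw [← Functor.map_comp, map_eq_zero_iff] at hg'
    obtain ⟨p', hp'⟩ := hg'
    simp only [dcomp_hom₃] at hp'
    have hsq : biprod.desc (-(φ.hom.hom₃)) B.obj.mor₂ ≫ ψ.hom.hom₃ =
        biprod.desc (-p') ψ.hom.hom₂ ≫ W.as.obj.mor₂ := by
      apply biprod.hom_ext'
      · simp only [biprod.inl_desc_assoc, Preadditive.neg_comp, hp']
      · simp only [biprod.inr_desc_assoc]
        exact ψ.hom.comm₂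
    obtain ⟨l, hl₂, hl₃⟩ := extend_mor (⟨_, hdist'⟩ : DistTriCat C) W.as
      (biprod.desc (-p') ψ.hom.hom₂) ψ.hom.hom₃ hsq
    refine ⟨(Quotient.functor (R2Rel C)).map l, ?_⟩
    rw [← Functor.map_comp, map_eq_iff]
    exact ⟨0, by simp [dcomp_hom₃, hc3, hl₃]⟩
  exact CokernelCofork.IsColimit.ofπ _ _
    (fun {W'} g' hg' => (key g' hg').choose)
    (fun {W'} g' hg' => (key g' hg').choose_spec)
    (fun {W'} g' hg' m hm => cepi _ _ (by rw [hm, (key g' hg').choose_spec]))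

lemma cok_main :
    ∃ c : B ⟶ (⟨Triangle.mk' _ _ _ u (biprod.desc (-(φ.hom.hom₃)) B.obj.mor₂) δ', hdist'⟩ : DistTriCat C),
      c.hom.hom₂ = biprod.lift 0 (𝟙 B.obj.obj₂) ∧ c.hom.hom₃ = 𝟙 B.obj.obj₃ ∧
      ∃ hzero : (Quotient.functor (R2Rel C)).map φ ≫ (Quotient.functor (R2Rel C)).map c = 0,
        Nonempty (IsColimit (CokernelCofork.ofπ ((Quotient.functor (R2Rel C)).map c) hzero)) := by
  obtain ⟨c, hc₂, hc₃⟩ := extend_mor B (⟨_, hdist'⟩ : DistTriCat C)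
    (biprod.lift 0 (𝟙 B.obj.obj₂)) (𝟙 B.obj.obj₃) (by simp)
  exact ⟨c, hc₂, hc₃, cok_zero φ hdist' c hc₃, ⟨cok_isColimit φ hdist' c hc₃ _⟩⟩

end Cok

section Mu

variable {A B : DistTriCat C} (φ : A ⟶ B)
  {Z : C} {w : A.obj.obj₂ ⊞ B.obj.obj₁ ⟶ Z}
  {δ : Z ⟶ (shiftFunctor C (1 : ℤ)).obj A.obj.obj₁}
  (hdist : Triangle.mk' _ _ _ (biprod.lift A.obj.mor₁ φ.hom.hom₁) w δ ∈ distTriang C)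
  (k : (⟨Triangle.mk' _ _ _ (biprod.lift A.obj.mor₁ φ.hom.hom₁) w δ, hdist⟩ : DistTriCat C) ⟶ A)
  (hk1 : k.hom.hom₁ = 𝟙 A.obj.obj₁)
  {Z' : C} {u : Z' ⟶ A.obj.obj₃ ⊞ B.obj.obj₂}
  {δ' : B.obj.obj₃ ⟶ (shiftFunctor C (1 : ℤ)).obj Z'}
  (hdist' : Triangle.mk' _ _ _ u (biprod.desc (-(φ.hom.hom₃)) B.obj.mor₂) δ' ∈ distTriang C)
  (c : B ⟶ (⟨Triangle.mk' _ _ _ u (biprod.desc (-(φ.hom.hom₃)) B.obj.mor₂) δ', hdist'⟩ : DistTriCat C))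
  (hc3 : c.hom.hom₃ = 𝟙 B.obj.obj₃)
  {Z₂ : C} {u₂ : Z₂ ⟶ Z ⊞ A.obj.obj₂}
  {δ₂ : A.obj.obj₃ ⟶ (shiftFunctor C (1 : ℤ)).obj Z₂}
  (hdist₂ : Triangle.mk' _ _ _ u₂ (biprod.desc (-(k.hom.hom₃)) A.obj.mor₂) δ₂ ∈ distTriang C)
  (ck : A ⟶ (⟨Triangle.mk' _ _ _ u₂ (biprod.desc (-(k.hom.hom₃)) A.obj.mor₂) δ₂, hdist₂⟩ : DistTriCat C))
  (hck3 : ck.hom.hom₃ = 𝟙 A.obj.obj₃)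

include hdist hdist' hdist₂ hk1 hc3 hck3

lemma mu_main :
    ∃ μ : (⟨Triangle.mk' _ _ _ u₂ (biprod.desc (-(k.hom.hom₃)) A.obj.mor₂) δ₂, hdist₂⟩ : DistTriCat C) ⟶ B,
      (Quotient.functor (R2Rel C)).map ck ≫ (Quotient.functor (R2Rel C)).map μ =
        (Quotient.functor (R2Rel C)).map φ ∧
      ∃ h0 : (Quotient.functor (R2Rel C)).map μ ≫ (Quotient.functor (R2Rel C)).map c = 0,
        Nonempty (IsLimit (KernelFork.ofι ((Quotient.functor (R2Rel C)).map μ) h0)) := by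
  have hk3 : k.hom.hom₃ ≫ A.obj.mor₃ = δ := by
    have h := k.hom.comm₃
    rw [hk1] at h
    simpa using h.symm
  have hz := ker_zero φ hdist k hk1
  rw [← Functor.map_comp, map_eq_zero_iff] at hz
  obtain ⟨p, hp⟩ := hz
  simp only [dcomp_hom₃] at hp
  have hsqμ : biprod.desc (-(k.hom.hom₃)) A.obj.mor₂ ≫ φ.hom.hom₃ =
      biprod.desc (-p) φ.hom.hom₂ ≫ B.obj.mor₂ := by
    apply biprod.hom_ext'
    · simp only [biprod.inl_desc_assoc, Preadditive.neg_comp, hp]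
    · simp only [biprod.inr_desc_assoc]
      exact φ.hom.comm₂
  obtain ⟨μ, hμ₂, hμ₃⟩ := extend_mor (⟨_, hdist₂⟩ : DistTriCat C) B
    (biprod.desc (-p) φ.hom.hom₂) φ.hom.hom₃ hsqμ
  have hpi : (Quotient.functor (R2Rel C)).map ck ≫ (Quotient.functor (R2Rel C)).map μ =
      (Quotient.functor (R2Rel C)).map φ := by
    rw [← Functor.map_comp, map_eq_iff]
    exact ⟨0, by simp [dcomp_hom₃, hck3, hμ₃]⟩
  have h0 : (Quotient.functor (R2Rel C)).map μ ≫ (Quotient.functor (R2Rel C)).map c = 0 := by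
    rw [← Functor.map_comp, map_eq_zero_iff]
    exact ⟨biprod.lift (-(𝟙 A.obj.obj₃)) 0, by simp [dcomp_hom₃, hc3, hμ₃]⟩
  have μmono : ∀ {W : CategoryTheory.Quotient (R2Rel C)}
      (m m' : W ⟶ (Quotient.functor (R2Rel C)).obj (⟨_, hdist₂⟩ : DistTriCat C)),
      m ≫ (Quotient.functor (R2Rel C)).map μ = m' ≫ (Quotient.functor (R2Rel C)).map μ →
        m = m' := by
    intro W m m' hmm'
    obtain ⟨e, rfl⟩ := (Quotient.functor (R2Rel C)).map_surjective m
    obtain ⟨e', rfl⟩ := (Quotient.functor (R2Rel C)).map_surjective m'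
    rw [← Functor.map_comp, ← Functor.map_comp, map_eq_iff] at hmm'
    obtain ⟨p₂, hp₂⟩ := hmm'
    simp only [dcomp_hom₃, hμ₃] at hp₂
    obtain ⟨ε, η, hεη⟩ := d_lemma φ hdist k.hom.hom₃ hk3 (e.hom.hom₃ - e'.hom.hom₃) p₂
      (by rw [Preadditive.sub_comp, hp₂])
    rw [map_eq_iff]
    refine ⟨biprod.lift (-ε) η, ?_⟩
    rw [hεη]
    simp [biprod.lift_desc, Preadditive.neg_comp, Preadditive.comp_neg]
  have key : ∀ {W : CategoryTheory.Quotient (R2Rel C)}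
      (g' : W ⟶ (Quotient.functor (R2Rel C)).obj B),
      g' ≫ (Quotient.functor (R2Rel C)).map c = 0 →
      ∃ l', l' ≫ (Quotient.functor (R2Rel C)).map μ = g' := by
    intro W g' hg'
    obtain ⟨ψ, rfl⟩ := (Quotient.functor (R2Rel C)).map_surjective g'
    rw [← Functor.map_comp, map_eq_zero_iff] at hg'
    obtain ⟨p', hp'⟩ := hg'
    simp only [dcomp_hom₃, hc3, Category.comp_id] at hp'
    -- hp' : p' ≫ desc (-(φ.hom.hom₃)) B.obj.mor₂ = ψ.hom.hom₃
    have hψ₃ : ψ.hom.hom₃ = -((p' ≫ biprod.fst) ≫ φ.hom.hom₃) + (p' ≫ biprod.snd) ≫ B.obj.mor₂ := by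
      rw [← hp']
      show p' ≫ biprod.desc (-(φ.hom.hom₃)) B.obj.mor₂ = _
      conv_lhs => rw [show p' = biprod.lift (p' ≫ biprod.fst) (p' ≫ biprod.snd) by
        apply biprod.hom_ext <;> simp]
      rw [biprod.lift_desc]
      simp [Preadditive.comp_neg, Preadditive.neg_comp]
    have hneg : -((p' ≫ biprod.fst) ≫ φ.hom.hom₃) =
        ψ.hom.hom₃ - (p' ≫ biprod.snd) ≫ B.obj.mor₂ := by
      rw [hψ₃]; abel
    have hcond : (W.as.obj.mor₂ ≫ (-(p' ≫ biprod.fst))) ≫ φ.hom.hom₃ =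
        (ψ.hom.hom₂ - W.as.obj.mor₂ ≫ (p' ≫ biprod.snd)) ≫ B.obj.mor₂ := by
      rw [Category.assoc, Preadditive.neg_comp, hneg, Preadditive.comp_sub, ψ.hom.comm₂,
        Preadditive.sub_comp]
      simp [Category.assoc]
    obtain ⟨ε, η, hεη⟩ := d_lemma φ hdist k.hom.hom₃ hk3 _ _ hcond
    have hsql : W.as.obj.mor₂ ≫ (-(p' ≫ biprod.fst)) =
        biprod.lift (-ε) η ≫ biprod.desc (-(k.hom.hom₃)) A.obj.mor₂ := by
      rw [hεη]
      simp [biprod.lift_desc, Preadditive.neg_comp, Preadditive.comp_neg]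
    obtain ⟨l, hl₂, hl₃⟩ := extend_mor W.as (⟨_, hdist₂⟩ : DistTriCat C)
      (biprod.lift (-ε) η) (-(p' ≫ biprod.fst)) hsql
    refine ⟨(Quotient.functor (R2Rel C)).map l, ?_⟩
    rw [← Functor.map_comp, map_eq_iff]
    refine ⟨-(p' ≫ biprod.snd), ?_⟩
    simp only [dcomp_hom₃, hl₃, hμ₃]
    rw [hψ₃]
    simp only [Preadditive.neg_comp]
    abel
  exact ⟨μ, hpi, h0, ⟨KernelFork.IsLimit.ofι _ _
    (fun {W'} g' hg' => (key g' hg').choose)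
    (fun {W'} g' hg' => (key g' hg').choose_spec)
    (fun {W'} g' hg' m hm => μmono _ _ (by rw [hm, (key g' hg').choose_spec]))⟩⟩

end Mu

section Abs

variable {D : Type*} [Category D] [Limits.HasZeroMorphisms D] [HasKernels D] [HasCokernels D]

/-- transfer a kernel fork along a map with the same vanishing property -/
noncomputable def kernTransfer {X Y Y' M : D} {f : X ⟶ Y} {f' : X ⟶ Y'} {i : M ⟶ X}
    {w : i ≫ f = 0} (h : IsLimit (KernelFork.ofι i w)) (w' : i ≫ f' = 0)
    (hiff : ∀ {U : D} (x : U ⟶ X), x ≫ f' = 0 → x ≫ f = 0) :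
    IsLimit (KernelFork.ofι i w') :=
  KernelFork.IsLimit.ofι _ _
    (fun {U} x hx => h.lift (KernelFork.ofι x (hiff x hx)))
    (fun {U} x hx => h.fac (KernelFork.ofι x (hiff x hx)) WalkingParallelPair.zero)
    (fun {U} x hx m hm => Fork.IsLimit.hom_ext h
      (hm.trans ((h.fac (KernelFork.ofι x (hiff x hx)) WalkingParallelPair.zero).symm)))

/-- transfer a cokernel cofork along a map with the same vanishing property -/
noncomputable def cokTransfer {X X' Y M : D} {f : X ⟶ Y} {f' : X' ⟶ Y} {q : Y ⟶ M}
    {w : f ≫ q = 0} (h : IsColimit (CokernelCofork.ofπ q w)) (w' : f' ≫ q = 0)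
    (hiff : ∀ {U : D} (x : Y ⟶ U), f' ≫ x = 0 → f ≫ x = 0) :
    IsColimit (CokernelCofork.ofπ q w') :=
  CokernelCofork.IsColimit.ofπ _ _
    (fun {U} x hx => h.desc (CokernelCofork.ofπ x (hiff x hx)))
    (fun {U} x hx => h.fac (CokernelCofork.ofπ x (hiff x hx)) WalkingParallelPair.one)
    (fun {U} x hx m hm => Cofork.IsColimit.hom_ext h
      (hm.trans ((h.fac (CokernelCofork.ofπ x (hiff x hx)) WalkingParallelPair.one).symm)))

lemma isIso_comparison {X Y : D} (f : X ⟶ Y) {KK M CC : D}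
    {k : KK ⟶ X} {p : X ⟶ M} {i : M ⟶ Y} {c : Y ⟶ CC}
    {hkf : k ≫ f = 0} {hfc : f ≫ c = 0} {hkp : k ≫ p = 0} {hic : i ≫ c = 0}
    (hpi : p ≫ i = f)
    (hk : IsLimit (KernelFork.ofι k hkf)) (hc : IsColimit (CokernelCofork.ofπ c hfc))
    (hp : IsColimit (CokernelCofork.ofπ p hkp)) (hi : IsLimit (KernelFork.ofι i hic)) :
    IsIso (Abelian.coimageImageComparison f) := by
  let e₁ : kernel f ≅ KK := IsLimit.conePointUniqueUpToIso (limit.isLimit _) hk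
  have he₁ : e₁.hom ≫ k = kernel.ι f :=
    IsLimit.conePointUniqueUpToIso_hom_comp (limit.isLimit _) hk
      WalkingParallelPair.zero
  have hkinv : k = e₁.inv ≫ kernel.ι f := by rw [← he₁, Iso.inv_hom_id_assoc]
  have hkι : kernel.ι f ≫ p = 0 := by rw [← he₁, Category.assoc, hkp, comp_zero]
  have hp' : IsColimit (CokernelCofork.ofπ p hkι) :=
    cokTransfer hp hkι (fun x hx => by rw [hkinv, Category.assoc, hx, comp_zero])
  let e₂ : cokernel (kernel.ι f) ≅ M :=
    IsColimit.coconePointUniqueUpToIso (colimit.isColimit _) hp'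
  have he₂ : cokernel.π (kernel.ι f) ≫ e₂.hom = p :=
    IsColimit.comp_coconePointUniqueUpToIso_hom (colimit.isColimit _) hp'
      WalkingParallelPair.one
  let e₄ : cokernel f ≅ CC := IsColimit.coconePointUniqueUpToIso (colimit.isColimit _) hc
  have he₄ : cokernel.π f ≫ e₄.hom = c :=
    IsColimit.comp_coconePointUniqueUpToIso_hom (colimit.isColimit _) hc
      WalkingParallelPair.one
  have hiπ : i ≫ cokernel.π f = 0 := by
    apply (cancel_mono e₄.hom).1
    rw [Category.assoc, he₄, hic, zero_comp]
  have hi' : IsLimit (KernelFork.ofι i hiπ) :=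
    kernTransfer hi hiπ (fun x hx => by rw [← he₄, ← Category.assoc, hx, zero_comp])
  let e₃ : M ≅ kernel (cokernel.π f) := IsLimit.conePointUniqueUpToIso hi' (limit.isLimit _)
  have he₃ : e₃.hom ≫ kernel.ι (cokernel.π f) = i :=
    IsLimit.conePointUniqueUpToIso_hom_comp hi' (limit.isLimit _)
      WalkingParallelPair.zero
  have hfact2 : cokernel.π (kernel.ι f) ≫ e₂.hom ≫ e₃.hom ≫ kernel.ι (cokernel.π f) = f := by
    rw [he₃, ← Category.assoc, he₂, hpi]
  have hchar : cokernel.π (kernel.ι f) ≫ Abelian.coimageImageComparison f ≫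
      kernel.ι (cokernel.π f) = f := Abelian.coimage_image_factorisation f
  have heq : Abelian.coimageImageComparison f = e₂.hom ≫ e₃.hom := by
    apply (cancel_epi (cokernel.π (kernel.ι f))).1
    apply (cancel_mono (kernel.ι (cokernel.π f))).1
    simp only [Category.assoc]
    rw [hchar, hfact2]
  rw [heq]
  infer_instance

end Abs

section Additivity

@[simp] lemma dadd_hom₁ {A B : DistTriCat C} (f g : A ⟶ B) :
    TriangleMorphism.hom₁ (f + g).hom = f.hom.hom₁ + g.hom.hom₁ := rfl
@[simp] lemma dadd_hom₂ {A B : DistTriCat C} (f g : A ⟶ B) :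
    TriangleMorphism.hom₂ (f + g).hom = f.hom.hom₂ + g.hom.hom₂ := rfl
@[simp] lemma dadd_hom₃' {A B : DistTriCat C} (f g : A ⟶ B) :
    TriangleMorphism.hom₃ (f + g).hom = f.hom.hom₃ + g.hom.hom₃ := rfl
@[simp] lemma dzero_hom₁ {A B : DistTriCat C} :
    TriangleMorphism.hom₁ (0 : A ⟶ B).hom = 0 := rfl
@[simp] lemma dzero_hom₂ {A B : DistTriCat C} :
    TriangleMorphism.hom₂ (0 : A ⟶ B).hom = 0 := rfl
@[simp] lemma did_hom₁ {A : DistTriCat C} :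
    TriangleMorphism.hom₁ (InducedCategory.Hom.hom (𝟙 A)) = 𝟙 A.obj.obj₁ := rfl
@[simp] lemma did_hom₂ {A : DistTriCat C} :
    TriangleMorphism.hom₂ (InducedCategory.Hom.hom (𝟙 A)) = 𝟙 A.obj.obj₂ := rfl

lemma hasZeroObject_quot : HasZeroObject (CategoryTheory.Quotient (R2Rel C)) := by
  refine ⟨(Quotient.functor (R2Rel C)).obj
    ⟨Pretriangulated.contractibleTriangle (0 : C),
      Pretriangulated.contractible_distinguished 0⟩, ?_⟩
  rw [IsZero.iff_id_eq_zero]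
  have h1 : 𝟙 ((Quotient.functor (R2Rel C)).obj
      (⟨Pretriangulated.contractibleTriangle (0 : C),
        Pretriangulated.contractible_distinguished 0⟩ : DistTriCat C)) =
      (Quotient.functor (R2Rel C)).map (𝟙 _) := (CategoryTheory.Functor.map_id _ _).symm
  rw [h1, ← Functor.map_zero (Quotient.functor (R2Rel C)) _ _, map_eq_iff]
  refine ⟨0, ?_⟩
  apply (isZero_zero C).eq_of_src

section Biprod

variable (A B : DistTriCat C)

/-- the pair of triangles -/
def pairTri : WalkingPair → Triangle C := fun j => WalkingPair.casesOn j A.obj B.obj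

lemma pair_distinguished : Pretriangulated.productTriangle (pairTri A B) ∈ distTriang C :=
  Pretriangulated.productTriangle_distinguished _
    (fun j => WalkingPair.casesOn j A.property B.property)

/-- direct sum in `Δ(C)` -/
noncomputable def biprodObj : DistTriCat C :=
  ⟨Pretriangulated.productTriangle (pairTri A B), pair_distinguished A B⟩

noncomputable def projL : biprodObj A B ⟶ A :=
  ObjectProperty.homMk (Pretriangulated.productTriangle.π (pairTri A B) WalkingPair.left)
noncomputable def projR : biprodObj A B ⟶ B :=
  ObjectProperty.homMk (Pretriangulated.productTriangle.π (pairTri A B) WalkingPair.right)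
noncomputable def inclL : A ⟶ biprodObj A B :=
  ObjectProperty.homMk (Pretriangulated.productTriangle.lift _
    (fun j => WalkingPair.casesOn j (𝟙 A.obj) (0 : A.obj ⟶ B.obj)))
noncomputable def inclR : B ⟶ biprodObj A B :=
  ObjectProperty.homMk (Pretriangulated.productTriangle.lift _
    (fun j => WalkingPair.casesOn j (0 : B.obj ⟶ A.obj) (𝟙 B.obj)))

lemma inclL_projL : inclL A B ≫ projL A B = 𝟙 A := by
  apply ObjectProperty.hom_ext
  apply TriangleMorphism.ext <;>
    simp [inclL, projL, biprodObj, pairTri,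
      Pretriangulated.productTriangle.lift, Pretriangulated.productTriangle.π]
  all_goals erw [Pi.lift_π]
  all_goals rfl

lemma inclL_projR : inclL A B ≫ projR A B = 0 := by
  apply ObjectProperty.hom_ext
  apply TriangleMorphism.ext <;>
    simp [inclL, projR, biprodObj, pairTri,
      Pretriangulated.productTriangle.lift, Pretriangulated.productTriangle.π]
  all_goals erw [Pi.lift_π]
  all_goals rfl

lemma inclR_projL : inclR A B ≫ projL A B = 0 := by
  apply ObjectProperty.hom_ext
  apply TriangleMorphism.ext <;>
    simp [inclR, projL, biprodObj, pairTri,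
      Pretriangulated.productTriangle.lift, Pretriangulated.productTriangle.π]
  all_goals erw [Pi.lift_π]
  all_goals rfl

lemma inclR_projR : inclR A B ≫ projR A B = 𝟙 B := by
  apply ObjectProperty.hom_ext
  apply TriangleMorphism.ext <;>
    simp [inclR, projR, biprodObj, pairTri,
      Pretriangulated.productTriangle.lift, Pretriangulated.productTriangle.π]
  all_goals erw [Pi.lift_π]
  all_goals rfl

lemma total_eq :
    projL A B ≫ inclL A B + projR A B ≫ inclR A B = 𝟙 (biprodObj A B) := by
  apply ObjectProperty.hom_ext
  apply TriangleMorphism.ext <;>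
  · apply Limits.Pi.hom_ext
    intro j
    rcases j with _ | _ <;>
      erw [Preadditive.add_comp, Category.assoc, Category.assoc, Pi.lift_π, Pi.lift_π] <;>
      simp [projL, inclL, projR, inclR, biprodObj, pairTri,
        Pretriangulated.productTriangle.lift, Pretriangulated.productTriangle.π] <;>
      erw [Category.comp_id, comp_zero, Category.id_comp] <;> abel

noncomputable def quotBicone :
    BinaryBicone ((Quotient.functor (R2Rel C)).obj A) ((Quotient.functor (R2Rel C)).obj B) where
  pt := (Quotient.functor (R2Rel C)).obj (biprodObj A B)
  fst := (Quotient.functor (R2Rel C)).map (projL A B)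
  snd := (Quotient.functor (R2Rel C)).map (projR A B)
  inl := (Quotient.functor (R2Rel C)).map (inclL A B)
  inr := (Quotient.functor (R2Rel C)).map (inclR A B)
  inl_fst := by rw [← Functor.map_comp, inclL_projL, CategoryTheory.Functor.map_id]
  inl_snd := by rw [← Functor.map_comp, inclL_projR, Functor.map_zero]
  inr_fst := by rw [← Functor.map_comp, inclR_projL, Functor.map_zero]
  inr_snd := by rw [← Functor.map_comp, inclR_projR, CategoryTheory.Functor.map_id]

lemma hasBinaryBiproducts_quot : HasBinaryBiproducts (CategoryTheory.Quotient (R2Rel C)) := by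
  constructor
  intro P Q
  exact HasBinaryBiproduct.mk ⟨quotBicone P.as Q.as, isBinaryBilimitOfTotal _ (by
    show (Quotient.functor (R2Rel C)).map (projL P.as Q.as) ≫
        (Quotient.functor (R2Rel C)).map (inclL P.as Q.as) +
      (Quotient.functor (R2Rel C)).map (projR P.as Q.as) ≫
        (Quotient.functor (R2Rel C)).map (inclR P.as Q.as) = 𝟙 _
    rw [← Functor.map_comp, ← Functor.map_comp, ← Functor.map_add, total_eq,
      CategoryTheory.Functor.map_id])⟩

end Biprod

end Additivity

end P19

end Proof

/-- Let `C` be a triangulated category. Then `Δ(C)/R₂` is an abelian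
category whose kernels and cokernels are computed via homotopy cartesian squares:
the kernel of `φ•` is induced by any distinguished triangle
`X₁ → X₂ ⊕ Y₁ → Z → ΣX₁` completing `(f₁, φ₁)` to a homotopy cartesian square, and the
cokernel by any distinguished triangle `Z → X₃ ⊕ Y₂ → Y₃ → ΣZ` with second map
`(-φ₃, g₂)` obtained dually. -/
theorem statement19 (C : Type u) [Category.{v} C] [Preadditive C] [HasZeroObject C]
    [HasShift C ℤ] [∀ n : ℤ, (CategoryTheory.shiftFunctor C n).Additive]
    [Pretriangulated C] [IsTriangulated C] :
    Nonempty (Abelian (CategoryTheory.Quotient (R2Rel C))) ∧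
    (∀ (A B : DistTriCat C) (φ : A ⟶ B),
      (∀ (Z : C) (w : A.obj.obj₂ ⊞ B.obj.obj₁ ⟶ Z)
         (δ : Z ⟶ (CategoryTheory.shiftFunctor C (1 : ℤ)).obj A.obj.obj₁)
         (hdist : Triangle.mk (biprod.lift A.obj.mor₁ (TriangleMorphism.hom₁ φ.hom)) w δ ∈
           distTriang C),
        ∃ k : (⟨Triangle.mk (biprod.lift A.obj.mor₁ (TriangleMorphism.hom₁ φ.hom)) w δ,
            hdist⟩ : DistTriCat C) ⟶ A,
          TriangleMorphism.hom₁ k.hom = 𝟙 A.obj.obj₁ ∧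
          TriangleMorphism.hom₂ k.hom = biprod.fst ∧
          ∃ hzero : (Quotient.functor (R2Rel C)).map k ≫
              (Quotient.functor (R2Rel C)).map φ = 0,
            Nonempty (IsLimit (KernelFork.ofι
              ((Quotient.functor (R2Rel C)).map k) hzero))) ∧
      (∀ (Z : C) (u : Z ⟶ A.obj.obj₃ ⊞ B.obj.obj₂)
         (δ' : B.obj.obj₃ ⟶ (CategoryTheory.shiftFunctor C (1 : ℤ)).obj Z)
         (hdist : Triangle.mk u
           (biprod.desc (-(TriangleMorphism.hom₃ φ.hom)) B.obj.mor₂) δ' ∈ distTriang C),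
        ∃ c : B ⟶ (⟨Triangle.mk u
            (biprod.desc (-(TriangleMorphism.hom₃ φ.hom)) B.obj.mor₂) δ', hdist⟩ : DistTriCat C),
          TriangleMorphism.hom₂ c.hom = biprod.lift 0 (𝟙 B.obj.obj₂) ∧
          TriangleMorphism.hom₃ c.hom = 𝟙 B.obj.obj₃ ∧
          ∃ hzero : (Quotient.functor (R2Rel C)).map φ ≫
              (Quotient.functor (R2Rel C)).map c = 0,
            Nonempty (IsColimit (CokernelCofork.ofπ
              ((Quotient.functor (R2Rel C)).map c) hzero)))) := by
  constructor
  · refine ⟨?_⟩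
    haveI hzo : HasZeroObject (CategoryTheory.Quotient (R2Rel C)) := P19.hasZeroObject_quot
    haveI hbb : HasBinaryBiproducts (CategoryTheory.Quotient (R2Rel C)) :=
      P19.hasBinaryBiproducts_quot
    haveI hfp : HasFiniteProducts (CategoryTheory.Quotient (R2Rel C)) :=
      hasFiniteProducts_of_has_binary_and_terminal
    haveI hker : HasKernels (CategoryTheory.Quotient (R2Rel C)) := by
      constructor
      intro P Q f
      obtain ⟨φ, rfl⟩ := (Quotient.functor (R2Rel C)).map_surjective f
      obtain ⟨Z, w, δ, hdist⟩ := Pretriangulated.distinguished_cocone_triangle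
        (biprod.lift P.as.obj.mor₁ φ.hom.hom₁)
      obtain ⟨k, hk1, hk2, hzero, ⟨hlim⟩⟩ := P19.ker_main φ hdist
      exact HasLimit.mk ⟨_, hlim⟩
    haveI hcok : HasCokernels (CategoryTheory.Quotient (R2Rel C)) := by
      constructor
      intro P Q f
      obtain ⟨φ, rfl⟩ := (Quotient.functor (R2Rel C)).map_surjective f
      obtain ⟨Z', u, δ', hdist'⟩ := Pretriangulated.distinguished_cocone_triangle₁
        (biprod.desc (-(φ.hom.hom₃)) Q.as.obj.mor₂)
      obtain ⟨c, hc2, hc3, hzero', ⟨hcolim⟩⟩ := P19.cok_main φ hdist'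
      exact HasColimit.mk ⟨_, hcolim⟩
    haveI hiso : ∀ {P Q : CategoryTheory.Quotient (R2Rel C)} (f : P ⟶ Q),
        IsIso (Abelian.coimageImageComparison f) := by
      intro P Q f
      obtain ⟨φ, rfl⟩ := (Quotient.functor (R2Rel C)).map_surjective f
      obtain ⟨Z, w, δ, hdist⟩ := Pretriangulated.distinguished_cocone_triangle
        (biprod.lift P.as.obj.mor₁ φ.hom.hom₁)
      obtain ⟨k, hk1, hk2, hzero, ⟨hlim⟩⟩ := P19.ker_main φ hdist
      obtain ⟨Z', u, δ', hdist'⟩ := Pretriangulated.distinguished_cocone_triangle₁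
        (biprod.desc (-(φ.hom.hom₃)) Q.as.obj.mor₂)
      obtain ⟨c, hc2, hc3, hzero', ⟨hcolim⟩⟩ := P19.cok_main φ hdist'
      obtain ⟨Z₂, u₂, δ₂, hdist₂⟩ := Pretriangulated.distinguished_cocone_triangle₁
        (biprod.desc (-(k.hom.hom₃)) P.as.obj.mor₂)
      obtain ⟨ck, hck2, hck3, hzero₂, ⟨hcolim₂⟩⟩ := P19.cok_main k hdist₂
      obtain ⟨μ, hpi, h0, ⟨hμlim⟩⟩ := P19.mu_main φ hdist k hk1 hdist' c hc3 hdist₂ ck hck3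
      exact P19.isIso_comparison _ hpi hlim hcolim hcolim₂ hμlim
    exact Abelian.ofCoimageImageComparisonIsIso
  · intro A B φ
    constructor
    · intro Z w δ hdist
      exact P19.ker_main φ hdist
    · intro Z u δ' hdist
      exact P19.cok_main φ hdist

end Paper
end
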